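/- arXiv:0809.3257 — 6 statements merged into one kernel-verified Lean document; each statement's English description precedes it below -/
import Mathlib

section
/- Let (X_n, d_n), n ∈ ℕ, be a sequence of metric spaces, and for each n ∈ ℕ let B_n^1 ⊆ B_n^2 ⊆ B_n^3 ⊆ ⋯ ⊆ X_n be a nested sequence of subsets. Assume that for every i ∈ ℕ the sequence of metric spaces (B_n^i, d_n), n ∈ ℕ, is uniformly compact. Then there exist a complete metric space Z, a strictly increasing sequence of indices (n_m), isometric embeddings φ_m : X_{n_m} → Z for every m ∈ ℕ, and compact subsets Y^1 ⊆ Y^2 ⊆ ⋯ ⊆ Z such that φ_m(B_{n_m}^i) ⊆ Y^i for all m ∈ ℕ and all i ∈ ℕ. -/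
universe u

open Metric Set Filter Topology

namespace GCAux

variable {X : ℕ → Type u} {A : Type}

/-- Iterated sum type for the gluing construction. -/
def glueT (X : ℕ → Type u) : ℕ → Type u
  | 0 => X 0
  | m + 1 => glueT X m ⊕ X (m + 1)

/-- Embedding of the top piece. -/
def glueEmb : ∀ m, X m → glueT X m
  | 0 => id
  | _ + 1 => Sum.inr

section

variable (inst : ∀ n, MetricSpace (X n)) (hX : ∀ n, Nonempty (X n))
  (F : ∀ n, A → X n) (V : ℕ → Set A) (ε : ℕ → ℝ) (hε : ∀ m, 0 < ε m)
  (hV : ∀ m p q, p ∈ V m → q ∈ V m →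
    |dist (F m p) (F m q) - dist (F (m + 1) p) (F (m + 1) q)| ≤ 2 * ε m)

/-- One gluing step: metric on `glueT X (m+1)` given the one on `glueT X m`. -/
noncomputable def glueStep (m : ℕ) (i : MetricSpace (glueT X m))
    (hemb : @Isometry _ _ (inst m).toPseudoEMetricSpace i.toPseudoEMetricSpace
      (glueEmb (X := X) m)) : MetricSpace (glueT X m ⊕ X (m + 1)) :=
  letI := inst; letI := i; letI := Classical.dec (Nonempty (V m))
  if h : Nonempty (V m) then
    Metric.glueMetricApprox (fun a : V m => glueEmb m (F m a))
      (fun a : V m => F (m + 1) a) (ε m) (hε m)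
      (fun p q => by
        rw [hemb.dist_eq]
        exact hV m p q p.2 q.2)
  else
    Metric.glueMetricApprox (Z := PUnit.{1})
      (fun _ => glueEmb m ((hX m).some))
      (fun _ => (hX (m + 1)).some) (ε m) (hε m)
      (fun p q => by simp only [dist_self, sub_zero, abs_zero]; linarith [hε m])

/-- The recursive family of metrics together with isometry of the top-piece embedding. -/
noncomputable def glueData : ∀ m, { i : MetricSpace (glueT X m) //
    @Isometry _ _ (inst m).toPseudoEMetricSpace i.toPseudoEMetricSpace (glueEmb (X := X) m) }
  | 0 => ⟨inst 0, letI := inst 0; isometry_id⟩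
  | m + 1 =>
    ⟨glueStep inst hX F V ε hε hV m (glueData m).1 (glueData m).2,
     by
      letI := inst (m + 1)
      apply @Isometry.of_dist_eq _ _ _
        (glueStep inst hX F V ε hε hV m (glueData m).1 (glueData m).2).toPseudoMetricSpace
      intro x y
      show @dist _ (glueStep inst hX F V ε hε hV m (glueData m).1 (glueData m).2).toPseudoMetricSpace.toDist
        (Sum.inr x) (Sum.inr y) = dist x y
      unfold glueStep
      letI := Classical.dec (Nonempty (V m))
      by_cases h : Nonempty (V m)
      · rw [dif_pos h]; rfl
      · rw [dif_neg h]; rfl⟩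

lemma glueStep_isometry_inl (m : ℕ) (i : MetricSpace (glueT X m))
    (hemb : @Isometry _ _ (inst m).toPseudoEMetricSpace i.toPseudoEMetricSpace
      (glueEmb (X := X) m)) :
    @Isometry _ _ i.toPseudoEMetricSpace
      (glueStep inst hX F V ε hε hV m i hemb).toPseudoEMetricSpace
      (Sum.inl : glueT X m → glueT X m ⊕ X (m + 1)) := by
  letI := i
  apply @Isometry.of_dist_eq _ _ _ (glueStep inst hX F V ε hε hV m i hemb).toPseudoMetricSpace
  intro x y
  show @dist _ (glueStep inst hX F V ε hε hV m i hemb).toPseudoMetricSpace.toDist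
    (Sum.inl x) (Sum.inl y) = dist x y
  unfold glueStep
  letI := Classical.dec (Nonempty (V m))
  by_cases h : Nonempty (V m)
  · rw [dif_pos h]; rfl
  · rw [dif_neg h]; rfl

lemma glueStep_dist_glued (m : ℕ) (i : MetricSpace (glueT X m))
    (hemb : @Isometry _ _ (inst m).toPseudoEMetricSpace i.toPseudoEMetricSpace
      (glueEmb (X := X) m)) (a : A) (ha : a ∈ V m) :
    @dist _ (glueStep inst hX F V ε hε hV m i hemb).toPseudoMetricSpace.toDist
      (Sum.inl (glueEmb m (F m a))) (Sum.inr (F (m + 1) a)) = ε m := by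
  letI := i
  have h : Nonempty (V m) := ⟨⟨a, ha⟩⟩
  unfold glueStep
  letI := Classical.dec (Nonempty (V m))
  rw [dif_pos h]
  exact Metric.glueDist_glued_points (Z := V m) (fun a : V m => glueEmb m (F m a))
    (fun a : V m => F (m + 1) a) (ε m) ⟨a, ha⟩

end

end GCAux


theorem gc_core (X : ℕ → Type u) (dX : ∀ n, MetricSpace (X n)) (hne : ∀ n, Nonempty (X n))
    (B : ∀ n : ℕ, ℕ → Set (X n))
    (hnested : ∀ n i, B n i ⊆ B n (i + 1))
    (hdiam : ∀ i : ℕ, ∃ D : ℝ, ∀ n, EMetric.diam (B n i) ≤ ENNReal.ofReal D)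
    (hcover : ∀ i : ℕ, ∃ N : ℝ → ℕ, ∀ ε : ℝ, 0 < ε → ∀ n,
      ∃ s : Finset (X n), s.card ≤ N ε ∧ B n i ⊆ ⋃ x ∈ s, Metric.ball x ε) :
    ∃ (Z : Type u) (dZ : MetricSpace Z),
      letI := dZ
      CompleteSpace Z ∧
      ∃ nm : ℕ → ℕ, StrictMono nm ∧
      ∃ φ : ∀ m : ℕ, X (nm m) → Z,
        (∀ m, Isometry (φ m)) ∧
        ∃ Y : ℕ → Set Z,
          (∀ i, IsCompact (Y i)) ∧ (∀ i, Y i ⊆ Y (i + 1)) ∧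
          ∀ m i, φ m '' B (nm m) i ⊆ Y i := by
  classical
  letI : ∀ n, MetricSpace (X n) := dX
  have hBmono : ∀ n, Monotone (B n) := fun n => monotone_nat_of_le_succ (hnested n)
  choose D hD using hdiam
  choose N hN using hcover
  set M : ℕ → ℕ → ℕ := fun i k => N i (1 / (k + 1)) with hM
  have hdistB : ∀ n i x y, x ∈ B n i → y ∈ B n i → dist x y ≤ max (D i) 0 := by
    intro n i x y hx hy
    have h1 : edist x y ≤ ENNReal.ofReal (D i) :=
      le_trans (EMetric.edist_le_diam_of_mem hx hy) (hD i n)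
    rw [dist_edist]
    calc (edist x y).toReal ≤ (ENNReal.ofReal (D i)).toReal :=
          ENNReal.toReal_mono ENNReal.ofReal_ne_top h1
      _ = max (D i) 0 := ENNReal.toReal_ofReal'
  -- construction of nets
  have hnet : ∀ n i k, ∃ F : ℕ → X n, (∀ j, (B n i).Nonempty → F j ∈ B n i) ∧
      (∀ x ∈ B n i, ∃ j < M i k, dist x (F j) < 2 / (k + 1)) := by
    intro n i k
    have hpos : (0:ℝ) < 1 / (k + 1) := by positivity
    obtain ⟨s, hcard, hcov⟩ := hN i (1 / (k + 1)) hpos n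
    obtain ⟨dflt, hdflt⟩ : ∃ z : X n, (B n i).Nonempty → z ∈ B n i := by
      by_cases h : (B n i).Nonempty
      · exact ⟨h.some, fun _ => h.some_mem⟩
      · exact ⟨(hne n).some, fun h' => absurd h' h⟩
    obtain ⟨b, hb1, hb2⟩ : ∃ b : X n → X n, (∀ c, (B n i).Nonempty → b c ∈ B n i) ∧
        (∀ c x, x ∈ Metric.ball c (1/(k+1)) ∩ B n i → dist c (b c) < 1/(k+1)) := by
      refine ⟨fun c => if h : (Metric.ball c (1/(k+1)) ∩ B n i).Nonempty then h.some else dflt,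
        ?_, ?_⟩
      · intro c hB
        by_cases h : (Metric.ball c (1/(k+1)) ∩ B n i).Nonempty
        · dsimp only; rw [dif_pos h]; exact h.some_mem.2
        · dsimp only; rw [dif_neg h]; exact hdflt hB
      · intro c x hx
        have h : (Metric.ball c (1/(k+1)) ∩ B n i).Nonempty := ⟨x, hx⟩
        simp only [dif_pos h]
        have h2 := h.some_mem.1
        rw [Metric.mem_ball] at h2
        rw [dist_comm]
        exact h2
    refine ⟨fun j => b (s.toList.getD j dflt), fun j hB => hb1 _ hB, ?_⟩
    intro x hx
    obtain ⟨c, hc, hxc⟩ := Set.mem_iUnion₂.1 (hcov hx)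
    obtain ⟨j, hj, hget⟩ := List.getElem_of_mem (Finset.mem_toList.2 hc)
    refine ⟨j, ?_, ?_⟩
    · calc j < s.toList.length := hj
        _ = s.card := Finset.length_toList s
        _ ≤ M i k := hcard
    · show dist x (b (s.toList.getD j dflt)) < 2 / (k + 1)
      rw [List.getD_eq_getElem _ _ hj, hget]
      have h1 : dist x c < 1/(k+1) := Metric.mem_ball.1 hxc
      have h2 : dist c (b c) < 1/(k+1) := hb2 c x ⟨hxc, hx⟩
      calc dist x (b c) ≤ dist x c + dist c (b c) := dist_triangle _ _ _
        _ < 1/(k+1) + 1/(k+1) := by linarith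
        _ = 2/(k+1) := by ring
  choose F hF1 hF2 using hnet
  -- the coordinate functions
  set C : (ℕ×ℕ×ℕ) → (ℕ×ℕ×ℕ) → ℝ := fun a b => max (D (max a.1 b.1)) 0 + 1 with hC
  set H : ℕ → ((ℕ×ℕ×ℕ) × (ℕ×ℕ×ℕ)) ⊕ ℕ → ℝ := fun n c =>
    Sum.rec (fun p => min (dist (F n p.1.1 p.1.2.1 p.1.2.2) (F n p.2.1 p.2.2.1 p.2.2.2))
      (C p.1 p.2)) (fun i => if (B n i).Nonempty then 1 else 0) c with hHdef
  set bd : ((ℕ×ℕ×ℕ) × (ℕ×ℕ×ℕ)) ⊕ ℕ → ℝ := fun c =>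
    Sum.rec (fun p => C p.1 p.2) (fun _ => 1) c with hbd
  have hHmem : ∀ n, H n ∈ Set.pi univ (fun c => Icc 0 (bd c)) := by
    intro n c _
    rcases c with p | i
    · refine ⟨le_min dist_nonneg ?_, min_le_right _ _⟩
      simp only [hC]
      positivity
    · by_cases h : (B n i).Nonempty <;> simp [hHdef, hbd, h]
  have hcpt : IsCompact (Set.pi univ (fun c => Icc (0:ℝ) (bd c))) :=
    isCompact_univ_pi (fun c => isCompact_Icc)
  obtain ⟨G, hGmem, u, humono, huconv⟩ := hcpt.tendsto_subseq (x := H) (fun n => hHmem n)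
  have hconv : ∀ c, Tendsto (fun m => H (u m) c) atTop (𝓝 (G c)) :=
    fun c => (tendsto_pi_nhds.1 huconv) c
  -- settled data
  set eOK : ℕ → Prop := fun i => 1/2 < G (Sum.inr i) with heOK
  set V : ℕ → Set (ℕ×ℕ×ℕ) := fun m =>
    {a | a.1 ≤ m ∧ a.2.1 ≤ m ∧ a.2.2 < M a.1 a.2.1 ∧ eOK a.1} with hVdef
  have hVmono : ∀ m m', m ≤ m' → V m ⊆ V m' := by
    rintro m m' hmm a ⟨h1, h2, h3, h4⟩
    exact ⟨h1.trans hmm, h2.trans hmm, h3, h4⟩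
  have hVfin : ∀ m, (V m).Finite := by
    intro m
    apply Set.Finite.subset (Set.Finite.prod (finite_Iic m)
      (Set.Finite.prod (finite_Iic m)
        (finite_Iio (((Finset.range (m+1)) ×ˢ (Finset.range (m+1))).sup (fun p => M p.1 p.2)))))
    rintro a ⟨h1, h2, h3, _⟩
    refine ⟨mem_Iic.2 h1, mem_Iic.2 h2, ?_⟩
    simp only [mem_Iio]
    have hle : M a.1 a.2.1 ≤ ((Finset.range (m+1)) ×ˢ (Finset.range (m+1))).sup
        (fun p => M p.1 p.2) :=
      Finset.le_sup (f := fun p : ℕ×ℕ => M p.1 p.2) (b := (a.1, a.2.1)) (Finset.mem_product.2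
        ⟨Finset.mem_range.2 (Nat.lt_succ_of_le h1), Finset.mem_range.2 (Nat.lt_succ_of_le h2)⟩)
    exact lt_of_lt_of_le h3 hle
  set Need : ℕ → Set (((ℕ×ℕ×ℕ) × (ℕ×ℕ×ℕ)) ⊕ ℕ) := fun m =>
    (Sum.inl '' ((V m) ×ˢ (V m))) ∪ (Sum.inr '' (Iic m)) with hNeed
  have hNeedfin : ∀ m, (Need m).Finite :=
    fun m => (((hVfin m).prod (hVfin m)).image _).union ((finite_Iic m).image _)
  have hgood : ∀ m : ℕ, ∃ T, ∀ n ≥ T, ∀ c ∈ Need m, |H (u n) c - G c| ≤ (1/2:ℝ)^(m+3) := by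
    intro m
    have hev : ∀ᶠ n in atTop, ∀ c ∈ Need m, |H (u n) c - G c| ≤ (1/2:ℝ)^(m+3) := by
      rw [eventually_all_finite (hNeedfin m)]
      intro c _
      have hpos : (0:ℝ) < (1/2:ℝ)^(m+3) := by positivity
      rw [eventually_atTop]
      obtain ⟨T0, hT0⟩ := Metric.tendsto_atTop.1 (hconv c) _ hpos
      refine ⟨T0, fun n hn => ?_⟩
      rw [← Real.dist_eq]
      exact (hT0 n hn).le
    exact eventually_atTop.1 hev
  choose T hT using hgood
  set v : ℕ → ℕ := fun m => m + (Finset.range (m+1)).sup T with hvdef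
  have hvmono : StrictMono v := by
    intro a b hab
    have hsup : (Finset.range (a+1)).sup T ≤ (Finset.range (b+1)).sup T :=
      Finset.sup_mono (Finset.range_subset_range.2 (by omega))
    simp only [hvdef]
    omega
  set w : ℕ → ℕ := fun m => u (v m) with hwdef
  have hwmono : StrictMono w := humono.comp hvmono
  have hsettle : ∀ m, ∀ c ∈ Need m, |H (w m) c - G c| ≤ (1/2:ℝ)^(m+3) := by
    intro m
    apply hT m (v m)
    have h1 : T m ≤ (Finset.range (m+1)).sup T := Finset.le_sup (Finset.self_mem_range_succ m)
    simp only [hvdef]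
    omega
  -- emptiness has settled
  have hNE : ∀ m i, i ≤ m → ((B (w m) i).Nonempty ↔ eOK i) := by
    intro m i him
    have hc : (Sum.inr i : ((ℕ×ℕ×ℕ) × (ℕ×ℕ×ℕ)) ⊕ ℕ) ∈ Need m :=
      Or.inr ⟨i, mem_Iic.2 him, rfl⟩
    have h := hsettle m _ hc
    have hb : (1/2:ℝ)^(m+3) ≤ 1/8 := by
      calc (1/2:ℝ)^(m+3) ≤ (1/2:ℝ)^3 :=
            pow_le_pow_of_le_one (by norm_num) (by norm_num) (by omega)
        _ = 1/8 := by norm_num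
    constructor
    · intro hne'
      have h1 : H (w m) (Sum.inr i) = 1 := by simp [hHdef, hne']
      rw [h1] at h
      have h2 := abs_le.1 h
      simp only [heOK]
      linarith [h2.1]
    · intro hok
      by_contra hne'
      have h1 : H (w m) (Sum.inr i) = 0 := by simp [hHdef, hne']
      rw [h1] at h
      have h2 := abs_le.1 h
      simp only [heOK] at hok
      linarith [h2.2]
  have hFmem : ∀ m (a : ℕ×ℕ×ℕ), a ∈ V m → F (w m) a.1 a.2.1 a.2.2 ∈ B (w m) a.1 :=
    fun m a ha => hF1 (w m) a.1 a.2.1 a.2.2 ((hNE m a.1 ha.1).2 ha.2.2.2)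
  have hHeq : ∀ m p q, p ∈ V m → q ∈ V m →
      H (w m) (Sum.inl (p, q)) = dist (F (w m) p.1 p.2.1 p.2.2) (F (w m) q.1 q.2.1 q.2.2) := by
    intro m p q hp hq
    have h1 : F (w m) p.1 p.2.1 p.2.2 ∈ B (w m) (max p.1 q.1) :=
      hBmono _ (le_max_left _ _) (hFmem m p hp)
    have h2 : F (w m) q.1 q.2.1 q.2.2 ∈ B (w m) (max p.1 q.1) :=
      hBmono _ (le_max_right _ _) (hFmem m q hq)
    have hd := hdistB _ _ _ _ h1 h2
    simp only [hHdef]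
    exact min_eq_left (by simp only [hC]; linarith)
  set Fn : ∀ m : ℕ, (ℕ×ℕ×ℕ) → X (w m) := fun m a => F (w m) a.1 a.2.1 a.2.2 with hFn
  set εg : ℕ → ℝ := fun m => (1/2:ℝ)^(m+3) with hεg
  have hεgpos : ∀ m, 0 < εg m := fun m => by positivity
  have hVcond : ∀ m p q, p ∈ V m → q ∈ V m →
      |dist (Fn m p) (Fn m q) - dist (Fn (m+1) p) (Fn (m+1) q)| ≤ 2 * εg m := by
    intro m p q hp hq
    have hc1 : (Sum.inl (p,q) : ((ℕ×ℕ×ℕ) × (ℕ×ℕ×ℕ)) ⊕ ℕ) ∈ Need m :=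
      Or.inl ⟨(p,q), ⟨hp, hq⟩, rfl⟩
    have hc2 : (Sum.inl (p,q) : ((ℕ×ℕ×ℕ) × (ℕ×ℕ×ℕ)) ⊕ ℕ) ∈ Need (m+1) :=
      Or.inl ⟨(p,q), ⟨hVmono m (m+1) (Nat.le_succ m) hp, hVmono m (m+1) (Nat.le_succ m) hq⟩, rfl⟩
    have h1 := hsettle m _ hc1
    have h2 := hsettle (m+1) _ hc2
    rw [hHeq m p q hp hq] at h1
    rw [hHeq (m+1) p q (hVmono m (m+1) (Nat.le_succ m) hp) (hVmono m (m+1) (Nat.le_succ m) hq)] at h2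
    have e1 := abs_le.1 h1
    have e2 := abs_le.1 h2
    have hh : (1/2:ℝ)^(m+1+3) = (1/2:ℝ)^(m+3) * (1/2) := by ring
    rw [abs_le]
    simp only [hεg]
    constructor <;> [skip; skip] <;> rw [hh] at e2 <;>
      [linarith [e1.1, e1.2, e2.1, e2.2]; linarith [e1.1, e1.2, e2.1, e2.2]]
  -- the glued space
  set X' : ℕ → Type u := fun m => X (w m) with hX'
  set inst' : ∀ m, MetricSpace (X' m) := fun m => dX (w m) with hinst'
  set data := GCAux.glueData (X := X') inst' (fun m => hne (w m)) Fn V εg hεgpos hVcond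
    with hdata
  letI instG : ∀ m, MetricSpace (GCAux.glueT X' m) := fun m => (data m).1
  have hfI : ∀ m, @Isometry _ _ ((data m).1.toPseudoEMetricSpace)
      ((data (m+1)).1.toPseudoEMetricSpace)
      (Sum.inl : GCAux.glueT X' m → GCAux.glueT X' (m+1)) := fun m =>
    GCAux.glueStep_isometry_inl inst' (fun m => hne (w m)) Fn V εg hεgpos hVcond m
      (data m).1 (data m).2
  set L := Metric.InductiveLimit (f := fun m =>
    (Sum.inl : GCAux.glueT X' m → GCAux.glueT X' (m+1))) hfI with hL
  letI : MetricSpace L := @Metric.instMetricSpaceInductiveLimit (GCAux.glueT X') instG _ hfI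
  set κ : ∀ m, GCAux.glueT X' m → L := fun m => Metric.toInductiveLimit hfI m with hκ
  have hκiso : ∀ m, Isometry (κ m) := fun m => Metric.toInductiveLimit_isometry hfI m
  set ι : ∀ m, X' m → L := fun m => κ m ∘ GCAux.glueEmb m with hι
  have hιiso : ∀ m, Isometry (ι m) := fun m => (hκiso m).comp (data m).2
  have hglue : ∀ m (a : ℕ×ℕ×ℕ), a ∈ V m →
      dist (ι m (Fn m a)) (ι (m+1) (Fn (m+1) a)) = εg m := by
    intro m a ha
    have h1 : ι m (Fn m a) = κ (m+1) (Sum.inl (GCAux.glueEmb m (Fn m a))) := by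
      have hcomm := Metric.toInductiveLimit_commute hfI m
      exact (congrFun hcomm (GCAux.glueEmb m (Fn m a))).symm
    have h2 : ι (m+1) (Fn (m+1) a) = κ (m+1) (Sum.inr (Fn (m+1) a)) := rfl
    rw [h1, h2]; refine ((hκiso (m+1)).dist_eq _ _).trans ?_
    exact GCAux.glueStep_dist_glued inst' (fun m => hne (w m)) Fn V εg hεgpos hVcond m
      (data m).1 (data m).2 a ha
  have hchain : ∀ (a : ℕ×ℕ×ℕ) m0, a ∈ V m0 → ∀ m, m0 ≤ m →
      dist (ι m0 (Fn m0 a)) (ι m (Fn m a)) ≤ (1/2:ℝ)^(m0+2) - (1/2:ℝ)^(m+2) := by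
    intro a m0 ha m hm
    induction m, hm using Nat.le_induction with
    | base => simp
    | succ m hm ih =>
      have haV : a ∈ V m := hVmono m0 m hm ha
      calc dist (ι m0 (Fn m0 a)) (ι (m+1) (Fn (m+1) a))
          ≤ dist (ι m0 (Fn m0 a)) (ι m (Fn m a)) +
            dist (ι m (Fn m a)) (ι (m+1) (Fn (m+1) a)) := dist_triangle _ _ _
        _ ≤ ((1/2:ℝ)^(m0+2) - (1/2:ℝ)^(m+2)) + εg m := add_le_add ih (le_of_eq (hglue m a haV))
        _ = (1/2:ℝ)^(m0+2) - (1/2:ℝ)^(m+1+2) := by simp only [hεg]; ring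
  -- total boundedness
  have hTB : ∀ i, TotallyBounded (⋃ m, ι m '' B (w m) i) := by
    intro i
    rw [Metric.totallyBounded_iff]
    intro ε hε
    obtain ⟨k, hk⟩ : ∃ k : ℕ, 2/((k:ℝ)+1) < ε/2 := by
      obtain ⟨k, hk⟩ := exists_nat_gt (4/ε)
      refine ⟨k, ?_⟩
      have hk1 : (0:ℝ) < (k:ℝ)+1 := by positivity
      rw [div_lt_iff₀ hk1]
      have h4 : 4/ε < (k:ℝ)+1 := hk.trans (by linarith)
      rw [div_lt_iff₀ hε] at h4
      linarith
    obtain ⟨m1, hm1⟩ : ∃ m1 : ℕ, (1/2:ℝ)^(m1+2) < ε/2 := by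
      obtain ⟨m1, hm1⟩ := exists_pow_lt_of_lt_one (show (0:ℝ) < ε/2 by linarith)
        (show (1/2:ℝ) < 1 by norm_num)
      refine ⟨m1, lt_of_le_of_lt ?_ hm1⟩
      exact pow_le_pow_of_le_one (by norm_num) (by norm_num) (by omega)
    set m0 := max (max i k) m1 with hm0
    refine ⟨⋃ m ∈ Iic m0, (fun j => ι m (F (w m) i k j)) '' (Iio (M i k)), ?_, ?_⟩
    · exact (finite_Iic m0).biUnion (fun m _ => (finite_Iio _).image _)
    · rintro z hz
      obtain ⟨m, hm⟩ := Set.mem_iUnion.1 hz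
      obtain ⟨x, hx, rfl⟩ := hm
      obtain ⟨j, hj, hdj⟩ := hF2 (w m) i k x hx
      have hdj2 : dist x (F (w m) i k j) < ε/2 := hdj.trans hk
      by_cases hmm : m ≤ m0
      · refine Set.mem_iUnion₂.2 ⟨ι m (F (w m) i k j), ?_, ?_⟩
        · exact Set.mem_biUnion (mem_Iic.2 hmm) ⟨j, hj, rfl⟩
        · rw [Metric.mem_ball, (hιiso m).dist_eq]
          linarith
      · push_neg at hmm
        have him0 : i ≤ m0 := le_trans (le_max_left i k) (le_max_left _ m1)
        have hkm0 : k ≤ m0 := le_trans (le_max_right i k) (le_max_left _ m1)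
        have hiok : eOK i := (hNE m i (him0.trans hmm.le)).1 ⟨x, hx⟩
        have haV : (i, k, j) ∈ V m0 := ⟨him0, hkm0, hj, hiok⟩
        have hch := hchain (i,k,j) m0 haV m hmm.le
        refine Set.mem_iUnion₂.2 ⟨ι m0 (F (w m0) i k j),
          Set.mem_biUnion (mem_Iic.2 le_rfl) ⟨j, hj, rfl⟩, ?_⟩
        rw [Metric.mem_ball]
        have hm0m1 : (1/2:ℝ)^(m0+2) ≤ (1/2:ℝ)^(m1+2) :=
          pow_le_pow_of_le_one (by norm_num) (by norm_num) (by omega)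
        have hpos : (0:ℝ) < (1/2:ℝ)^(m+2) := by positivity
        calc dist (ι m x) (ι m0 (F (w m0) i k j))
            ≤ dist (ι m x) (ι m (F (w m) i k j)) +
              dist (ι m (F (w m) i k j)) (ι m0 (F (w m0) i k j)) := dist_triangle _ _ _
          _ ≤ ε/2 + ((1/2:ℝ)^(m0+2) - (1/2:ℝ)^(m+2)) := by
              rw [dist_comm (ι m (F (w m) i k j))]
              refine add_le_add ?_ hch
              rw [(hιiso m).dist_eq]
              exact hdj2.le
          _ < ε := by linarith
  -- final assembly
  refine ⟨UniformSpace.Completion L, inferInstance, inferInstance, w, hwmono,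
    fun m => (fun y : L => (y : UniformSpace.Completion L)) ∘ ι m, ?_, ?_⟩
  · intro m
    exact UniformSpace.Completion.coe_isometry.comp (hιiso m)
  · refine ⟨fun i => closure (⋃ m,
      ((fun y : L => (y : UniformSpace.Completion L)) ∘ ι m) '' B (w m) i), ?_, ?_, ?_⟩
    · intro i
      apply TotallyBounded.isCompact_of_isClosed _ isClosed_closure
      rw [totallyBounded_closure]
      have himg : (⋃ m, ((fun y : L => (y : UniformSpace.Completion L)) ∘ ι m) '' B (w m) i)
          = (fun y : L => (y : UniformSpace.Completion L)) '' (⋃ m, ι m '' B (w m) i) := by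
        rw [Set.image_iUnion]
        exact Set.iUnion_congr (fun m => (Set.image_comp _ _ _))
      rw [himg]
      exact (hTB i).image (UniformSpace.Completion.uniformContinuous_coe L)
    · intro i
      apply closure_mono
      exact Set.iUnion_mono (fun m => Set.image_mono (hnested (w m) i))
    · intro m i
      exact (Set.subset_iUnion
        (fun m => ((fun y : L => (y : UniformSpace.Completion L)) ∘ ι m) '' B (w m) i) m).trans
        subset_closure

/-- Proposition 4.2 of Wenger's paper: given a sequence of metric spaces `Xₙ`, each equipped
with a nested sequence of subsets `Bₙ¹ ⊆ Bₙ² ⊆ ⋯ ⊆ Xₙ` such that for each `i` the family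
`(Bₙⁱ)ₙ` is uniformly compact (uniformly bounded diameters and, for each `ε > 0`, a uniform
bound `N ε` on the number of `ε`-balls needed to cover each `Bₙⁱ`), there exist a complete
metric space `Z`, a subsequence, isometric embeddings of the corresponding `Xₙ` into `Z`,
and nested compact sets `Y¹ ⊆ Y² ⊆ ⋯ ⊆ Z` containing the images of the `Bₙⁱ`. -/
theorem extended_gromov_compactness
    (X : ℕ → Type u) (dX : ∀ n, MetricSpace (X n))
    (B : ∀ n : ℕ, ℕ → Set (X n))
    (hnested : ∀ n i, B n i ⊆ B n (i + 1))
    (hdiam : ∀ i : ℕ, ∃ D : ℝ, ∀ n, EMetric.diam (B n i) ≤ ENNReal.ofReal D)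
    (hcover : ∀ i : ℕ, ∃ N : ℝ → ℕ, ∀ ε : ℝ, 0 < ε → ∀ n,
      ∃ s : Finset (X n), s.card ≤ N ε ∧ B n i ⊆ ⋃ x ∈ s, Metric.ball x ε) :
    ∃ (Z : Type u) (dZ : MetricSpace Z),
      letI := dZ
      CompleteSpace Z ∧
      ∃ nm : ℕ → ℕ, StrictMono nm ∧
      ∃ φ : ∀ m : ℕ, X (nm m) → Z,
        (∀ m, Isometry (φ m)) ∧
        ∃ Y : ℕ → Set Z,
          (∀ i, IsCompact (Y i)) ∧ (∀ i, Y i ⊆ Y (i + 1)) ∧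
          ∀ m i, φ m '' B (nm m) i ⊆ Y i := by
  classical
  by_cases hcase : ∀ N : ℕ, ∃ n, N < n ∧ Nonempty (X n)
  · obtain ⟨e, hemono, hene⟩ := Filter.extraction_of_frequently_atTop
      (P := fun n => Nonempty (X n)) (Filter.frequently_atTop'.2 (fun N => (hcase N).imp (fun n h => ⟨h.1, h.2⟩)))
    have hdiam' : ∀ i : ℕ, ∃ D : ℝ, ∀ m,
        EMetric.diam (B (e m) i) ≤ ENNReal.ofReal D := by
      intro i
      obtain ⟨D, hD⟩ := hdiam i
      exact ⟨D, fun m => hD (e m)⟩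
    have hcover' : ∀ i : ℕ, ∃ N : ℝ → ℕ, ∀ ε : ℝ, 0 < ε → ∀ m,
        ∃ s : Finset (X (e m)), s.card ≤ N ε ∧ B (e m) i ⊆ ⋃ x ∈ s, Metric.ball x ε := by
      intro i
      obtain ⟨N, hN⟩ := hcover i
      exact ⟨N, fun ε hε m => hN ε hε (e m)⟩
    obtain ⟨Z, dZ, hcomp, nm', hnm', φ, hφ, Y, hY1, hY2, hY3⟩ :=
      gc_core (fun m => X (e m)) (fun m => dX (e m)) hene (fun m => B (e m))
        (fun m i => hnested (e m) i) hdiam' hcover'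
    exact ⟨Z, dZ, hcomp, fun m => e (nm' m), hemono.comp hnm', φ, hφ, Y, hY1, hY2, hY3⟩
  · push_neg at hcase
    obtain ⟨N, hN⟩ := hcase
    have hempty : ∀ m : ℕ, IsEmpty (X (N + 1 + m)) := by
      intro m
      rw [← not_nonempty_iff]
      exact not_nonempty_iff.2 (hN (N + 1 + m) (by omega))
    refine ⟨PUnit.{u+1}, inferInstance, inferInstance, fun m => N + 1 + m, ?_,
      fun m _ => PUnit.unit, ?_, fun _ => Set.univ, ?_, ?_, ?_⟩
    · intro a b h
      simp only
      omega
    · intro m x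
      exact (hempty m).elim x
    · intro i
      exact isCompact_univ
    · intro i
      exact subset_rfl
    · intro m i
      exact Set.subset_univ _
end

section
/- Let (k,α) be either a pair with k ∈ ℕ, k ≥ 2, and α ∈ ℝ, α > 1, or the pair (1,0), and let γ ∈ (0,1). Write F := F_{k,α,γ} and H := H_{k,α,γ}. Let r₀ > 0 and let f : [0,r₀] → [0,∞) be non-decreasing and continuous from the right with f(r₀) < 5^{-(k+α)} F(r₀). Set r_* := sup{ r ∈ [0,r₀] : f(r) ≥ F(r) } (this supremum is attained since f is non-decreasing and right-continuous, and the set is nonempty because f(0) ≥ 0 = F(0)), and assume r_* > 0. Then r_* < r₀/5, and there exists a Lebesgue-measurable subset K ⊆ (r_*, r₀/5) of strictly positive Lebesgue measure such that for every r ∈ K one has f(5r) < 5^{k+α} f(r), f is differentiable at r, and f'(r) < (k+α)·H(f(r)). -/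
/-- The auxiliary function `F_{k,α,γ}` from Wenger's paper: for `k ≥ 2`, `α > 1`,
`F_{k,α,γ}(r) = γ·r^k` for `0 ≤ r ≤ 1` and `γ·r^α` for `r > 1`; for `(k,α) = (1,0)`,
`F_{1,0,γ}(r) = γ·r`. -/
noncomputable def Fgen (k : ℕ) (α γ r : ℝ) : ℝ :=
  if k = 1 then γ * r else if r ≤ 1 then γ * r ^ (k : ℝ) else γ * r ^ α

/-- The auxiliary function `H_{k,α,γ}` from Wenger's paper: for `k ≥ 2`, `α > 1`,
`H_{k,α,γ}(r) = γ^{1/k}·r^{(k-1)/k}` for `0 ≤ r ≤ γ` and `γ^{1/α}·r^{(α-1)/α}` for `r > γ`;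
for `(k,α) = (1,0)`, `H_{1,0,γ}(r) = γ`. -/
noncomputable def Hgen (k : ℕ) (α γ r : ℝ) : ℝ :=
  if k = 1 then γ
  else if r ≤ γ then γ ^ (1 / (k : ℝ)) * r ^ (((k : ℝ) - 1) / (k : ℝ))
  else γ ^ (1 / α) * r ^ ((α - 1) / α)


open Set MeasureTheory Filter Real

section aux

variable {k : ℕ} {α γ : ℝ}

lemma Fgen_pos (hkα : (2 ≤ k ∧ 1 < α) ∨ (k = 1 ∧ α = 0)) (hγ0 : 0 < γ) {r : ℝ}
    (hr : 0 < r) : 0 < Fgen k α γ r := by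
  unfold Fgen
  split_ifs
  · positivity
  · exact mul_pos hγ0 (Real.rpow_pos_of_pos hr _)
  · exact mul_pos hγ0 (Real.rpow_pos_of_pos hr _)

lemma Fgen_mono (hkα : (2 ≤ k ∧ 1 < α) ∨ (k = 1 ∧ α = 0)) (hγ0 : 0 < γ) {x y : ℝ}
    (hx : 0 ≤ x) (hxy : x ≤ y) : Fgen k α γ x ≤ Fgen k α γ y := by
  rcases hkα with ⟨hk, hα⟩ | ⟨hk, hα⟩
  · have hk1 : k ≠ 1 := by omega
    have hkR : (0:ℝ) ≤ (k:ℝ) := by positivity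
    have hαR : (0:ℝ) ≤ α := by linarith
    unfold Fgen
    rw [if_neg hk1, if_neg hk1]
    by_cases hy1 : y ≤ 1
    · have hx1 : x ≤ 1 := hxy.trans hy1
      rw [if_pos hx1, if_pos hy1]
      exact mul_le_mul_of_nonneg_left (Real.rpow_le_rpow hx hxy hkR) hγ0.le
    · push_neg at hy1
      rw [if_neg (not_le.2 hy1)]
      by_cases hx1 : x ≤ 1
      · rw [if_pos hx1]
        have h1 : x ^ (k:ℝ) ≤ 1 := Real.rpow_le_one hx hx1 hkR
        have h2 : (1:ℝ) ≤ y ^ α := Real.one_le_rpow hy1.le hαR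
        nlinarith
      · push_neg at hx1
        rw [if_neg (not_le.2 hx1)]
        exact mul_le_mul_of_nonneg_left (Real.rpow_le_rpow (by linarith) hxy hαR) hγ0.le
  · subst hk
    unfold Fgen
    rw [if_pos rfl, if_pos rfl]
    nlinarith

lemma Fgen_five (hkα : (2 ≤ k ∧ 1 < α) ∨ (k = 1 ∧ α = 0)) (hγ0 : 0 < γ) {s : ℝ}
    (hs : 0 ≤ s) : Fgen k α γ (5 * s) ≤ (5:ℝ) ^ ((k:ℝ) + α) * Fgen k α γ s := by
  rcases hkα with ⟨hk, hα⟩ | ⟨hk, hα⟩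
  · have hk1 : k ≠ 1 := by omega
    have hkR : (2:ℝ) ≤ (k:ℝ) := by exact_mod_cast hk
    have h5 : (1:ℝ) ≤ 5 := by norm_num
    have h5k : (1:ℝ) ≤ (5:ℝ) ^ (k:ℝ) := Real.one_le_rpow h5 (by linarith)
    have hsum : (5:ℝ) ^ ((k:ℝ) + α) = (5:ℝ) ^ (k:ℝ) * (5:ℝ) ^ α :=
      Real.rpow_add (by norm_num) _ _
    unfold Fgen
    rw [if_neg hk1, if_neg hk1]
    by_cases h5s : 5 * s ≤ 1
    · have hs1 : s ≤ 1 := by linarith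
      rw [if_pos h5s, if_pos hs1, Real.mul_rpow (by norm_num) hs, hsum]
      have h5α : (1:ℝ) ≤ (5:ℝ) ^ α := Real.one_le_rpow h5 (by linarith)
      have hA : (0:ℝ) ≤ (5:ℝ) ^ (k:ℝ) * (γ * s ^ (k:ℝ)) :=
        mul_nonneg (Real.rpow_nonneg (by norm_num) _)
          (mul_nonneg hγ0.le (Real.rpow_nonneg hs _))
      nlinarith [hA]
    · push_neg at h5s
      rw [if_neg (not_le.2 h5s)]
      have hspos : 0 < s := by linarith
      by_cases hs1 : s ≤ 1
      · rw [if_pos hs1, Real.mul_rpow (by norm_num) hs, hsum]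
        have key : s ^ α ≤ (5:ℝ) ^ (k:ℝ) * s ^ (k:ℝ) := by
          rcases le_total α (k:ℝ) with hαk | hαk
          · have h1 : s ^ α = s ^ (k:ℝ) * s ^ (α - (k:ℝ)) := by
              rw [← Real.rpow_add hspos]; ring_nf
            have h2 : s ^ (α - (k:ℝ)) = (s⁻¹) ^ ((k:ℝ) - α) := by
              rw [Real.inv_rpow hs, ← Real.rpow_neg hs]; ring_nf
            have h3 : s⁻¹ ≤ 5 := by
              rw [inv_le_comm₀ hspos (by norm_num)]; linarith
            have h4 : (s⁻¹) ^ ((k:ℝ) - α) ≤ (5:ℝ) ^ ((k:ℝ) - α) :=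
              Real.rpow_le_rpow (by positivity) h3 (by linarith)
            have h5' : (5:ℝ) ^ ((k:ℝ) - α) ≤ (5:ℝ) ^ (k:ℝ) :=
              Real.rpow_le_rpow_of_exponent_le h5 (by linarith)
            calc s ^ α = s ^ (k:ℝ) * (s⁻¹) ^ ((k:ℝ) - α) := by rw [h1, h2]
              _ ≤ s ^ (k:ℝ) * (5:ℝ) ^ (k:ℝ) := by
                  have := Real.rpow_nonneg hs (k:ℝ)
                  nlinarith
              _ = (5:ℝ) ^ (k:ℝ) * s ^ (k:ℝ) := by ring
          · have h1 : s ^ α ≤ s ^ (k:ℝ) := Real.rpow_le_rpow_of_exponent_ge hspos hs1 hαk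
            nlinarith [Real.rpow_nonneg hs (k:ℝ)]
        have h5α : (0:ℝ) < (5:ℝ) ^ α := Real.rpow_pos_of_pos (by norm_num) _
        calc γ * ((5:ℝ) ^ α * s ^ α) ≤ γ * ((5:ℝ) ^ α * ((5:ℝ) ^ (k:ℝ) * s ^ (k:ℝ))) :=
              mul_le_mul_of_nonneg_left (mul_le_mul_of_nonneg_left key h5α.le) hγ0.le
          _ = (5:ℝ) ^ (k:ℝ) * (5:ℝ) ^ α * (γ * s ^ (k:ℝ)) := by ring
      · rw [if_neg hs1, Real.mul_rpow (by norm_num) hs, hsum]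
        have h5α : (0:ℝ) < (5:ℝ) ^ α := Real.rpow_pos_of_pos (by norm_num) _
        have hsα : (0:ℝ) ≤ s ^ α := Real.rpow_nonneg hs _
        nlinarith [mul_nonneg (mul_nonneg h5α.le hγ0.le) hsα]
  · subst hk
    unfold Fgen
    rw [if_pos rfl, if_pos rfl, Nat.cast_one,
      show ((1:ℝ) + α) = 1 by rw [hα]; ring, Real.rpow_one]
    nlinarith

lemma Hgen_pos (hkα : (2 ≤ k ∧ 1 < α) ∨ (k = 1 ∧ α = 0)) (hγ0 : 0 < γ) {r : ℝ}
    (hr : 0 < r) : 0 < Hgen k α γ r := by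
  unfold Hgen
  split_ifs
  · exact hγ0
  · exact mul_pos (Real.rpow_pos_of_pos hγ0 _) (Real.rpow_pos_of_pos hr _)
  · exact mul_pos (Real.rpow_pos_of_pos hγ0 _) (Real.rpow_pos_of_pos hr _)

lemma Hgen_mono (hkα : (2 ≤ k ∧ 1 < α) ∨ (k = 1 ∧ α = 0)) (hγ0 : 0 < γ) {x y : ℝ}
    (hx : 0 ≤ x) (hxy : x ≤ y) : Hgen k α γ x ≤ Hgen k α γ y := by
  rcases hkα with ⟨hk, hα⟩ | ⟨hk, hα⟩
  · have hk1 : k ≠ 1 := by omega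
    have hkR : (2:ℝ) ≤ (k:ℝ) := by exact_mod_cast hk
    have hk0 : (k:ℝ) ≠ 0 := by positivity
    have hα0 : α ≠ 0 := by linarith
    have he1 : (0:ℝ) ≤ ((k:ℝ) - 1) / (k:ℝ) := div_nonneg (by linarith) (by linarith)
    have he2 : (0:ℝ) ≤ (α - 1) / α := div_nonneg (by linarith) (by linarith)
    have hγk : γ ^ (1 / (k:ℝ)) * γ ^ (((k:ℝ) - 1) / (k:ℝ)) = γ := by
      rw [← Real.rpow_add hγ0]
      rw [show 1 / (k:ℝ) + ((k:ℝ) - 1) / (k:ℝ) = 1 by field_simp; ring]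
      exact Real.rpow_one γ
    have hγα : γ ^ (1 / α) * γ ^ ((α - 1) / α) = γ := by
      rw [← Real.rpow_add hγ0]
      rw [show 1 / α + (α - 1) / α = 1 by field_simp; ring]
      exact Real.rpow_one γ
    unfold Hgen
    rw [if_neg hk1, if_neg hk1]
    by_cases hyγ : y ≤ γ
    · rw [if_pos (hxy.trans hyγ), if_pos hyγ]
      exact mul_le_mul_of_nonneg_left (Real.rpow_le_rpow hx hxy he1)
        (Real.rpow_nonneg hγ0.le _)
    · push_neg at hyγ
      rw [if_neg (not_le.2 hyγ)]
      by_cases hxγ : x ≤ γ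
      · rw [if_pos hxγ]
        calc γ ^ (1 / (k:ℝ)) * x ^ (((k:ℝ) - 1) / (k:ℝ))
            ≤ γ ^ (1 / (k:ℝ)) * γ ^ (((k:ℝ) - 1) / (k:ℝ)) :=
              mul_le_mul_of_nonneg_left (Real.rpow_le_rpow hx hxγ he1)
                (Real.rpow_nonneg hγ0.le _)
          _ = γ := hγk
          _ = γ ^ (1 / α) * γ ^ ((α - 1) / α) := hγα.symm
          _ ≤ γ ^ (1 / α) * y ^ ((α - 1) / α) :=
              mul_le_mul_of_nonneg_left (Real.rpow_le_rpow hγ0.le hyγ.le he2)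
                (Real.rpow_nonneg hγ0.le _)
      · push_neg at hxγ
        rw [if_neg (not_le.2 hxγ)]
        exact mul_le_mul_of_nonneg_left (Real.rpow_le_rpow hx hxy he2)
          (Real.rpow_nonneg hγ0.le _)
  · subst hk
    unfold Hgen
    simp

end aux
section aux2

variable {k : ℕ} {α γ : ℝ}

lemma Fgen_slope (hkα : (2 ≤ k ∧ 1 < α) ∨ (k = 1 ∧ α = 0)) (hγ0 : 0 < γ) {r : ℝ}
    (hr : 0 < r) :
    ∀ᶠ x in nhdsWithin r (Set.Ioi r),
      Fgen k α γ x - Fgen k α γ r ≤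
        ((k:ℝ) + α) * Hgen k α γ (Fgen k α γ r) * (x - r) := by
  rcases hkα with ⟨hk, hα⟩ | ⟨hk, hα⟩
  · have hk1 : k ≠ 1 := by omega
    have hkR : (2:ℝ) ≤ (k:ℝ) := by exact_mod_cast hk
    have hk0 : (k:ℝ) ≠ 0 := by positivity
    have hα0 : (0:ℝ) < α := by linarith
    have hγk : γ ^ (1 / (k:ℝ)) * γ ^ (((k:ℝ) - 1) / (k:ℝ)) = γ := by
      rw [← Real.rpow_add hγ0, show 1 / (k:ℝ) + ((k:ℝ) - 1) / (k:ℝ) = 1 by field_simp; ring]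
      exact Real.rpow_one γ
    have hγα : γ ^ (1 / α) * γ ^ ((α - 1) / α) = γ := by
      rw [← Real.rpow_add hγ0, show 1 / α + (α - 1) / α = 1 by field_simp; ring]
      exact Real.rpow_one γ
    obtain ⟨d, hdc, hF⟩ : ∃ d, d < ((k:ℝ) + α) * Hgen k α γ (Fgen k α γ r) ∧
        HasDerivWithinAt (Fgen k α γ) d (Set.Ici r) r := by
      rcases lt_trichotomy r 1 with hr1 | hr1 | hr1
      · -- r < 1
        have heq : Fgen k α γ =ᶠ[nhds r] fun x => γ * x ^ (k:ℝ) :=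
          eventuallyEq_of_mem (Iio_mem_nhds hr1) (fun x hx => by
            unfold Fgen; rw [if_neg hk1, if_pos (le_of_lt hx)])
        have hd : HasDerivAt (Fgen k α γ) (γ * ((k:ℝ) * r ^ ((k:ℝ) - 1))) r :=
          HasDerivAt.congr_of_eventuallyEq
            ((Real.hasDerivAt_rpow_const (Or.inl hr.ne')).const_mul γ) heq
        have hFr : Fgen k α γ r = γ * r ^ (k:ℝ) := by
          unfold Fgen; rw [if_neg hk1, if_pos hr1.le]
        have hrk1 : r ^ (k:ℝ) ≤ 1 := Real.rpow_le_one hr.le hr1.le (by linarith)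
        have hFrγ : Fgen k α γ r ≤ γ := by rw [hFr]; nlinarith
        have hH : Hgen k α γ (Fgen k α γ r) = γ * r ^ ((k:ℝ) - 1) := by
          unfold Hgen
          rw [if_neg hk1, if_pos hFrγ, hFr,
            Real.mul_rpow hγ0.le (Real.rpow_nonneg hr.le _),
            ← Real.rpow_mul hr.le,
            show (k:ℝ) * (((k:ℝ) - 1) / (k:ℝ)) = (k:ℝ) - 1 by field_simp,
            ← mul_assoc, hγk]
        refine ⟨_, ?_, hd.hasDerivWithinAt⟩
        rw [hH]
        have h3 := Real.rpow_pos_of_pos hr ((k:ℝ) - 1)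
        nlinarith [mul_pos (mul_pos hα0 hγ0) h3]
      · -- r = 1
        subst hr1
        have heq : Set.EqOn (Fgen k α γ) (fun x => γ * x ^ α) (Set.Ici (1:ℝ)) := by
          intro x hx
          rcases eq_or_lt_of_le (Set.mem_Ici.mp hx) with h | h
          · unfold Fgen; rw [if_neg hk1, if_pos (le_of_eq h.symm), ← h]
            simp [Real.one_rpow]
          · unfold Fgen; rw [if_neg hk1, if_neg (not_le.2 h)]
        have hd0 : HasDerivAt (fun x : ℝ => γ * x ^ α) (γ * (α * (1:ℝ) ^ (α - 1))) 1 :=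
          (Real.hasDerivAt_rpow_const (Or.inl one_ne_zero)).const_mul γ
        have hd : HasDerivWithinAt (Fgen k α γ) (γ * α) (Set.Ici 1) 1 := by
          have h2 := hd0.hasDerivWithinAt (s := Set.Ici 1)
          rw [Real.one_rpow, mul_one] at h2
          exact h2.congr heq (heq Set.self_mem_Ici)
        have hF1 : Fgen k α γ 1 = γ := by
          unfold Fgen; rw [if_neg hk1, if_pos le_rfl, Real.one_rpow, mul_one]
        have hH : Hgen k α γ (Fgen k α γ 1) = γ := by
          unfold Hgen; rw [if_neg hk1, hF1, if_pos le_rfl, hγk]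
        refine ⟨_, ?_, hd⟩
        rw [hH]
        nlinarith
      · -- 1 < r
        have heq : Fgen k α γ =ᶠ[nhds r] fun x => γ * x ^ α :=
          eventuallyEq_of_mem (Ioi_mem_nhds hr1) (fun x hx => by
            unfold Fgen; rw [if_neg hk1, if_neg (not_le.2 hx)])
        have hd : HasDerivAt (Fgen k α γ) (γ * (α * r ^ (α - 1))) r :=
          HasDerivAt.congr_of_eventuallyEq
            ((Real.hasDerivAt_rpow_const (Or.inl hr.ne')).const_mul γ) heq
        have hFr : Fgen k α γ r = γ * r ^ α := by
          unfold Fgen; rw [if_neg hk1, if_neg (not_le.2 hr1)]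
        have hrα : 1 < r ^ α := Real.one_lt_rpow hr1 hα0
        have hFrγ : ¬ Fgen k α γ r ≤ γ := by rw [hFr]; nlinarith
        have hH : Hgen k α γ (Fgen k α γ r) = γ * r ^ (α - 1) := by
          unfold Hgen
          rw [if_neg hk1, if_neg hFrγ, hFr,
            Real.mul_rpow hγ0.le (Real.rpow_nonneg hr.le _),
            ← Real.rpow_mul hr.le,
            show α * ((α - 1) / α) = α - 1 by field_simp,
            ← mul_assoc, hγα]
        refine ⟨_, ?_, hd.hasDerivWithinAt⟩
        rw [hH]
        have h3 := Real.rpow_pos_of_pos hr (α - 1)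
        nlinarith [mul_pos (mul_pos (show (0:ℝ) < (k:ℝ) by linarith) hγ0) h3]
    rw [hasDerivWithinAt_iff_tendsto_slope, Set.Ici_sdiff_left] at hF
    filter_upwards [hF.eventually_lt_const hdc, self_mem_nhdsWithin] with x hx hx'
    have hxr : 0 < x - r := sub_pos.2 hx'
    rw [slope_def_field] at hx
    have := (div_lt_iff₀ hxr).1 hx
    linarith
  · subst hk
    refine Filter.Eventually.of_forall fun x => ?_
    unfold Fgen Hgen
    rw [if_pos rfl, if_pos rfl, if_pos rfl, hα, Nat.cast_one]
    nlinarith [sq_nonneg (x - r)]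

lemma Hgen_measurable (hkα : (2 ≤ k ∧ 1 < α) ∨ (k = 1 ∧ α = 0)) :
    Measurable (Hgen k α γ) := by
  unfold Hgen
  by_cases hk : k = 1
  · simp only [if_pos hk]; exact measurable_const
  · simp only [if_neg hk]
    obtain ⟨hk2, hα⟩ | ⟨h1, _⟩ := hkα
    swap; · exact absurd h1 hk
    have hkR : (2:ℝ) ≤ (k:ℝ) := by exact_mod_cast hk2
    have he1 : (0:ℝ) ≤ ((k:ℝ) - 1) / (k:ℝ) := div_nonneg (by linarith) (by linarith)
    have he2 : (0:ℝ) ≤ (α - 1) / α := div_nonneg (by linarith) (by linarith)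
    exact Measurable.ite (measurableSet_le measurable_id measurable_const)
      (((Real.continuous_rpow_const he1).measurable).const_mul _)
      (((Real.continuous_rpow_const he2).measurable).const_mul _)

lemma mono_deriv_meas {g : ℝ → ℝ} (hg : Monotone g) {a b c : ℝ}
    {S : Set ℝ} (hS : S ⊆ Set.Ioo a b)
    (hd : ∀ x ∈ S, c ≤ deriv g x) :
    ENNReal.ofReal c * MeasureTheory.volume S ≤ ENNReal.ofReal (g b - g a) := by
  classical
  set μ := hg.stieltjesFunction.measure with hμ
  have h0 : ENNReal.ofReal c * MeasureTheory.volume S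
      = ∫⁻ x in S, ENNReal.ofReal c := by
    rw [MeasureTheory.setLIntegral_const]
  calc ENNReal.ofReal c * MeasureTheory.volume S
      = ∫⁻ x in S, ENNReal.ofReal c := h0
    _ ≤ ∫⁻ x in S, ENNReal.ofReal (deriv g x) :=
        MeasureTheory.setLIntegral_mono
          ((measurable_deriv g).ennreal_ofReal) (fun x hx =>
            ENNReal.ofReal_le_ofReal (hd x hx))
    _ = ∫⁻ x in S, ENNReal.ofReal
          ((MeasureTheory.Measure.rnDeriv μ MeasureTheory.volume x).toReal) := by
        refine MeasureTheory.lintegral_congr_ae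
          (MeasureTheory.ae_restrict_of_ae ?_)
        filter_upwards [hg.ae_hasDerivAt] with x hx
        rw [hx.deriv]
    _ ≤ ∫⁻ x in S, MeasureTheory.Measure.rnDeriv μ MeasureTheory.volume x :=
        MeasureTheory.lintegral_mono fun x => ENNReal.ofReal_toReal_le
    _ ≤ μ S := MeasureTheory.Measure.setLIntegral_rnDeriv_le S
    _ ≤ μ (Set.Ioo a b) := MeasureTheory.measure_mono hS
    _ = ENNReal.ofReal (Function.leftLim hg.stieltjesFunction b
          - hg.stieltjesFunction a) := hg.stieltjesFunction.measure_Ioo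
    _ ≤ ENNReal.ofReal (g b - g a) := by
        apply ENNReal.ofReal_le_ofReal
        have h1 : g a ≤ hg.stieltjesFunction a := by
          rw [hg.stieltjesFunction_eq]
          exact hg.le_rightLim le_rfl
        have h2 : Function.leftLim hg.stieltjesFunction b ≤ g b := by
          apply le_of_tendsto (hg.stieltjesFunction.mono.tendsto_leftLim b)
          filter_upwards [self_mem_nhdsWithin] with y hy
          rw [hg.stieltjesFunction_eq]
          exact hg.rightLim_le hy
        linarith

end aux2

theorem analytic_lemma (k : ℕ) (α : ℝ)
    (hkα : (2 ≤ k ∧ 1 < α) ∨ (k = 1 ∧ α = 0))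
    (γ : ℝ) (hγ : γ ∈ Set.Ioo (0 : ℝ) 1)
    (r₀ : ℝ) (hr₀ : 0 < r₀) (f : ℝ → ℝ)
    (hmono : MonotoneOn f (Set.Icc 0 r₀))
    (hnonneg : ∀ r ∈ Set.Icc (0 : ℝ) r₀, 0 ≤ f r)
    (hright : ∀ r ∈ Set.Ico (0 : ℝ) r₀, ContinuousWithinAt f (Set.Ici r) r)
    (hfr₀ : f r₀ < (5 : ℝ) ^ (-((k : ℝ) + α)) * Fgen k α γ r₀)
    (rstar : ℝ)
    (hrstar : IsGreatest {r | r ∈ Set.Icc (0 : ℝ) r₀ ∧ Fgen k α γ r ≤ f r} rstar)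
    (hrstar_pos : 0 < rstar) :
    rstar < r₀ / 5 ∧
      ∃ K ⊆ Set.Ioo rstar (r₀ / 5), MeasurableSet K ∧ 0 < MeasureTheory.volume K ∧
        ∀ r ∈ K, f (5 * r) < (5 : ℝ) ^ ((k : ℝ) + α) * f r ∧
          DifferentiableAt ℝ f r ∧ deriv f r < ((k : ℝ) + α) * Hgen k α γ (f r) := by
  obtain ⟨hγ0, hγ1⟩ := hγ
  obtain ⟨⟨hrs_mem, hrs_F⟩, hrs_ub⟩ := hrstar
  have hrsr₀ : rstar ≤ r₀ := hrs_mem.2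
  have hLpos : 0 < (k:ℝ) + α := by
    rcases hkα with ⟨hk, hα⟩ | ⟨hk, hα⟩
    · have : (2:ℝ) ≤ (k:ℝ) := by exact_mod_cast hk
      linarith
    · subst hk; rw [hα]; norm_num
  have h5L : (0:ℝ) < (5:ℝ) ^ ((k:ℝ) + α) := Real.rpow_pos_of_pos (by norm_num) _
  have hlt : ∀ r, rstar < r → r ≤ r₀ → f r < Fgen k α γ r := by
    intro r h1 h2
    by_contra hcon
    push_neg at hcon
    have : r ≤ rstar := hrs_ub ⟨⟨le_trans hrstar_pos.le h1.le, h2⟩, hcon⟩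
    exact absurd h1 (not_lt.2 this)
  have hpart1 : rstar < r₀ / 5 := by
    by_contra hcon
    push_neg at hcon
    have h1 : Fgen k α γ (r₀/5) ≤ Fgen k α γ rstar :=
      Fgen_mono hkα hγ0 (by linarith) hcon
    have h2 : f rstar ≤ f r₀ := hmono ⟨hrs_mem.1, hrsr₀⟩ ⟨hr₀.le, le_refl _⟩ hrsr₀
    have h3 : Fgen k α γ r₀ ≤ (5:ℝ)^((k:ℝ)+α) * Fgen k α γ (r₀/5) := by
      have := Fgen_five hkα hγ0 (s := r₀/5) (by linarith)
      rwa [show 5 * (r₀/5) = r₀ by ring] at this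
    have h4 : (5:ℝ)^(-((k:ℝ)+α)) * Fgen k α γ r₀ ≤ Fgen k α γ (r₀/5) := by
      have h5 : (5:ℝ)^(-((k:ℝ)+α)) * ((5:ℝ)^((k:ℝ)+α) * Fgen k α γ (r₀/5))
          = Fgen k α γ (r₀/5) := by
        rw [← mul_assoc, ← Real.rpow_add (by norm_num),
          show (-((k:ℝ)+α)) + ((k:ℝ)+α) = 0 by ring, Real.rpow_zero, one_mul]
      have hp := Real.rpow_pos_of_pos (show (0:ℝ) < 5 by norm_num) (-((k:ℝ)+α))
      have := mul_le_mul_of_nonneg_left h3 hp.le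
      linarith
    linarith
  refine ⟨hpart1, ?_⟩
  -- monotone extension g of f
  set g : ℝ → ℝ := fun x => f (min (max x 0) r₀) with hgdef
  have hg : Monotone g := by
    intro x y hxy
    have hx : min (max x 0) r₀ ∈ Set.Icc (0:ℝ) r₀ :=
      ⟨le_min (le_max_right _ _) hr₀.le, min_le_right _ _⟩
    have hy : min (max y 0) r₀ ∈ Set.Icc (0:ℝ) r₀ :=
      ⟨le_min (le_max_right _ _) hr₀.le, min_le_right _ _⟩
    exact hmono hx hy (min_le_min (max_le_max hxy le_rfl) le_rfl)
  have hgf : ∀ x ∈ Set.Icc (0:ℝ) r₀, g x = f x := by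
    intro x hx
    simp only [hgdef]
    rw [max_eq_left hx.1, min_eq_left hx.2]
  have hfg_ev : ∀ r ∈ Set.Ioo (0:ℝ) r₀, f =ᶠ[nhds r] g := fun r hr =>
    Filter.eventuallyEq_of_mem (Ioo_mem_nhds hr.1 hr.2)
      (fun x hx => (hgf x ⟨hx.1.le, hx.2.le⟩).symm)
  have hfs_F : 0 < Fgen k α γ rstar := Fgen_pos hkα hγ0 hrstar_pos
  -- right-continuity at 5⬝rstar
  have h5rs : 5 * rstar < r₀ := by linarith
  have hfρ : f (5 * rstar) < Fgen k α γ (5 * rstar) := hlt _ (by linarith) h5rs.le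
  have hFρ : Fgen k α γ (5 * rstar) ≤ (5:ℝ)^((k:ℝ)+α) * Fgen k α γ rstar :=
    Fgen_five hkα hγ0 (by linarith)
  have hkey : f (5 * rstar) < (5:ℝ)^((k:ℝ)+α) * f rstar := by
    have := mul_le_mul_of_nonneg_left hrs_F h5L.le
    linarith
  have hcont := hright (5 * rstar) ⟨by linarith, h5rs⟩
  have hev : ∀ᶠ s in nhdsWithin (5*rstar) (Set.Ici (5*rstar)),
      f s < (5:ℝ)^((k:ℝ)+α) * f rstar := hcont.eventually_lt_const hkey
  rw [eventually_nhdsWithin_iff, Metric.eventually_nhds_iff] at hev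
  obtain ⟨ε, hε, hev⟩ := hev
  -- pick right endpoint b
  set c := ((k:ℝ) + α) * Hgen k α γ (Fgen k α γ rstar) with hcdef
  have hcpos : 0 < c := mul_pos hLpos (Hgen_pos hkα hγ0 hfs_F)
  have hslope := Fgen_slope hkα hγ0 hrstar_pos
  have hmem1 : ∀ᶠ x in nhdsWithin rstar (Set.Ioi rstar), x < r₀/5 :=
    Filter.Eventually.filter_mono nhdsWithin_le_nhds (eventually_lt_nhds hpart1)
  have hmem2 : ∀ᶠ x in nhdsWithin rstar (Set.Ioi rstar), x < rstar + ε/5 :=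
    Filter.Eventually.filter_mono nhdsWithin_le_nhds (eventually_lt_nhds (by linarith))
  obtain ⟨b, hb_slope, hbr5, hbε, hb_gt⟩ :=
    (hslope.and (hmem1.and (hmem2.and self_mem_nhdsWithin))).exists
  rw [← hcdef] at hb_slope
  have hab : rstar < b := hb_gt
  have hbr₀ : b ≤ r₀ := by linarith
  have hfb : f b - f rstar < c * (b - rstar) := by
    have h1 : f b < Fgen k α γ b := hlt b hab hbr₀
    linarith
  -- property (ii) on (rstar, b)
  have hii : ∀ r ∈ Set.Ioo rstar b, f (5*r) < (5:ℝ)^((k:ℝ)+α) * f r := by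
    intro r hrr
    have hr0 : 0 < r := lt_trans hrstar_pos hrr.1
    have hdist : dist (5*r) (5*rstar) < ε := by
      rw [Real.dist_eq, abs_of_nonneg (by linarith [hrr.1.le])]
      linarith [hrr.2, hbε]
    have h5r : (5*r) ∈ Set.Ici (5*rstar) := by
      simp only [Set.mem_Ici]; linarith [hrr.1.le]
    have h1 : f (5*r) < (5:ℝ)^((k:ℝ)+α) * f rstar := hev hdist h5r
    have h2 : f rstar ≤ f r := hmono ⟨hrs_mem.1, hrsr₀⟩ ⟨hr0.le, by linarith [hrr.2]⟩ hrr.1.le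
    have := mul_le_mul_of_nonneg_left h2 h5L.le
    linarith
  -- the bad set B and differentiability set D
  set D := {x : ℝ | DifferentiableAt ℝ g x} with hDdef
  have hD : MeasurableSet D := measurableSet_of_differentiableAt ℝ g
  set B := Set.Ioo rstar b ∩ {x : ℝ | ((k:ℝ)+α) * Hgen k α γ (g x) ≤ deriv g x} with hBdef
  have hBmeas : MeasurableSet B := by
    have h1 : Measurable fun x => ((k:ℝ)+α) * Hgen k α γ (g x) :=
      ((Hgen_measurable hkα).comp hg.measurable).const_mul _
    exact measurableSet_Ioo.inter (measurableSet_le h1 (measurable_deriv g))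
  have hdB : ∀ x ∈ B, c ≤ deriv g x := by
    rintro x ⟨hx1, hx2⟩
    have hx0 : 0 < x := lt_trans hrstar_pos hx1.1
    have hxr₀ : x ≤ r₀ := by linarith [hx1.2]
    have hgx : g x = f x := hgf x ⟨hx0.le, hxr₀⟩
    have h2 : f rstar ≤ f x := hmono ⟨hrs_mem.1, hrsr₀⟩ ⟨hx0.le, hxr₀⟩ hx1.1.le
    have h3 : Hgen k α γ (Fgen k α γ rstar) ≤ Hgen k α γ (g x) := by
      rw [hgx]; exact Hgen_mono hkα hγ0 hfs_F.le (by linarith)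
    calc c ≤ ((k:ℝ)+α) * Hgen k α γ (g x) := mul_le_mul_of_nonneg_left h3 hLpos.le
      _ ≤ deriv g x := hx2
  have hmeas := mono_deriv_meas hg (Set.inter_subset_left (t := _)) hdB
  have hgb : g b = f b := hgf b ⟨by linarith, hbr₀⟩
  have hga : g rstar = f rstar := hgf rstar ⟨hrs_mem.1, hrsr₀⟩
  have hvolB : MeasureTheory.volume B < ENNReal.ofReal (b - rstar) := by
    rw [hgb, hga] at hmeas
    have h1 : ENNReal.ofReal (f b - f rstar) < ENNReal.ofReal (c * (b - rstar)) :=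
      (ENNReal.ofReal_lt_ofReal_iff (by nlinarith)).2 hfb
    have h2 : ENNReal.ofReal c * MeasureTheory.volume B
        < ENNReal.ofReal c * ENNReal.ofReal (b - rstar) := by
      rw [← ENNReal.ofReal_mul hcpos.le]
      exact lt_of_le_of_lt hmeas h1
    exact (ENNReal.mul_lt_mul_iff_right (ENNReal.ofReal_pos.2 hcpos).ne'
      ENNReal.ofReal_ne_top).1 h2
  have hnull : MeasureTheory.volume Dᶜ = 0 := by
    have h := hg.ae_differentiableAt
    rwa [MeasureTheory.ae_iff] at h
  have hIooD : MeasureTheory.volume (Set.Ioo rstar b ∩ D) = ENNReal.ofReal (b - rstar) := by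
    rw [← Set.diff_compl, MeasureTheory.measure_diff_null hnull, Real.volume_Ioo]
  refine ⟨(Set.Ioo rstar b ∩ D) \ B, ?_, ?_, ?_, ?_⟩
  · intro x hx
    exact ⟨hx.1.1.1, lt_trans hx.1.1.2 hbr5⟩
  · exact (measurableSet_Ioo.inter hD).diff hBmeas
  · have h1 : ENNReal.ofReal (b - rstar) - MeasureTheory.volume B
        ≤ MeasureTheory.volume ((Set.Ioo rstar b ∩ D) \ B) := by
      rw [← hIooD]
      exact MeasureTheory.le_measure_diff
    have h2 : 0 < ENNReal.ofReal (b - rstar) - MeasureTheory.volume B :=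
      tsub_pos_iff_lt.2 hvolB
    exact lt_of_lt_of_le h2 h1
  · rintro r ⟨⟨hr1, hr2⟩, hr3⟩
    have hr0 : 0 < r := lt_trans hrstar_pos hr1.1
    have hrr₀ : r < r₀ := lt_trans hr1.2 (by linarith)
    have hfgr := hfg_ev r ⟨hr0, hrr₀⟩
    have hdiff : DifferentiableAt ℝ f r := hfgr.differentiableAt_iff.2 hr2
    refine ⟨hii r hr1, hdiff, ?_⟩
    have hderiv : deriv f r = deriv g r := hfgr.deriv_eq
    have hnotB : ¬ (((k:ℝ)+α) * Hgen k α γ (g r) ≤ deriv g r) := fun h => hr3 ⟨hr1, h⟩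
    push_neg at hnotB
    have hgr : g r = f r := hgf r ⟨hr0.le, hrr₀.le⟩
    rw [hderiv, ← hgr]
    exact hnotB
end

section
/- Let k ∈ ℕ with k ≥ 2, let α ∈ ℝ with α > 1, and let λ, δ ∈ (0,1]. Let L > 0 and let (t_i)_{i ∈ ℕ} be a sequence of reals with 0 ≤ t_i < δ·L for every i, such that the series ∑_{i=1}^∞ t_i converges and λ·∑_{i=1}^∞ t_i ≤ L. Then ∑_{i=1}^∞ I_{k,α}(t_i) ≤ (2(1+δλ)/λ)·max{(2δ)^{1/(k-1)}, (2δ)^{1/(α-1)}}·I_{k,α}(L). -/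
/-- The isoperimetric profile function `I_{k,α}` from Wenger's paper (for `k ≥ 2`, `α > 1`):
`I_{k,α}(r) = r^{k/(k-1)}` for `0 ≤ r ≤ 1` and `r^{α/(α-1)}` for `r > 1`. -/
noncomputable def Iaux (k : ℕ) (α r : ℝ) : ℝ :=
  if r ≤ 1 then r ^ ((k : ℝ) / ((k : ℝ) - 1)) else r ^ (α / (α - 1))

lemma Iaux_nonneg (k : ℕ) (α : ℝ) {r : ℝ} (hr : 0 ≤ r) : 0 ≤ Iaux k α r := by
  unfold Iaux; split <;> exact Real.rpow_nonneg hr _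

lemma exp_split {x : ℝ} (hx : 1 < x) : x / (x - 1) = 1 + 1 / (x - 1) := by
  have h : x - 1 ≠ 0 := by linarith
  field_simp
  ring

lemma rpow_split {x e : ℝ} (hx : 0 < x) (he : 1 < e) :
    x ^ (e / (e - 1)) = x * x ^ (1 / (e - 1)) := by
  rw [exp_split he, Real.rpow_add hx, Real.rpow_one]

/-- `I(r)/r` is nondecreasing: `I(t)·c ≤ t·I(c)` for `0 ≤ t ≤ c`. -/
lemma Iaux_linear_bound (k : ℕ) (hk : 2 ≤ k) (α : ℝ) (hα : 1 < α)
    {t c : ℝ} (hc : 0 < c) (ht0 : 0 ≤ t) (htc : t ≤ c) :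
    Iaux k α t * c ≤ t * Iaux k α c := by
  have hk2 : (2:ℝ) ≤ (k:ℝ) := by exact_mod_cast hk
  have hkgt : (1:ℝ) < (k:ℝ) := by linarith
  have hkk : (0:ℝ) < (k:ℝ) - 1 := by linarith
  have haa : (0:ℝ) < α - 1 := by linarith
  have hpk : (0:ℝ) < 1 / ((k:ℝ) - 1) := by positivity
  have hpa : (0:ℝ) < 1 / (α - 1) := by positivity
  rcases eq_or_lt_of_le ht0 with h0 | ht0'
  · have hI0 : Iaux k α 0 = 0 := by
      unfold Iaux
      rw [if_pos (by norm_num)]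
      exact Real.zero_rpow (by positivity)
    rw [← h0, hI0]
    simp
  by_cases hc1 : c ≤ 1
  · have ht1 : t ≤ 1 := le_trans htc hc1
    have hIt : Iaux k α t = t * t ^ (1/((k:ℝ)-1)) := by
      rw [Iaux, if_pos ht1, rpow_split ht0' hkgt]
    have hIc : Iaux k α c = c * c ^ (1/((k:ℝ)-1)) := by
      rw [Iaux, if_pos hc1, rpow_split hc hkgt]
    rw [hIt, hIc]
    have h1 : t ^ (1/((k:ℝ)-1)) ≤ c ^ (1/((k:ℝ)-1)) :=
      Real.rpow_le_rpow ht0 htc hpk.le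
    calc t * t ^ (1/((k:ℝ)-1)) * c = t * c * t ^ (1/((k:ℝ)-1)) := by ring
      _ ≤ t * c * c ^ (1/((k:ℝ)-1)) := mul_le_mul_of_nonneg_left h1 (by positivity)
      _ = t * (c * c ^ (1/((k:ℝ)-1))) := by ring
  · push_neg at hc1
    have hIc : Iaux k α c = c * c ^ (1/(α-1)) := by
      rw [Iaux, if_neg (not_le.mpr hc1), rpow_split hc hα]
    by_cases ht1 : t ≤ 1
    · have hIt : Iaux k α t ≤ t := by
        rw [Iaux, if_pos ht1]
        calc t ^ ((k:ℝ)/((k:ℝ)-1)) ≤ t ^ (1:ℝ) := by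
              apply Real.rpow_le_rpow_of_exponent_ge ht0' ht1
              rw [exp_split hkgt]; linarith [hpk.le]
          _ = t := Real.rpow_one t
      have hc1' : (1:ℝ) ≤ c ^ (1/(α-1)) := by
        calc (1:ℝ) = c ^ (0:ℝ) := (Real.rpow_zero c).symm
          _ ≤ c ^ (1/(α-1)) :=
            Real.rpow_le_rpow_of_exponent_le hc1.le hpa.le
      rw [hIc]
      calc Iaux k α t * c ≤ t * c := mul_le_mul_of_nonneg_right hIt hc.le
        _ = t * c * 1 := by ring
        _ ≤ t * c * c ^ (1/(α-1)) :=
            mul_le_mul_of_nonneg_left hc1' (by positivity)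
        _ = t * (c * c ^ (1/(α-1))) := by ring
    · push_neg at ht1
      have hIt : Iaux k α t = t * t ^ (1/(α-1)) := by
        rw [Iaux, if_neg (not_le.mpr ht1), rpow_split ht0' hα]
      rw [hIt, hIc]
      have h1 : t ^ (1/(α-1)) ≤ c ^ (1/(α-1)) :=
        Real.rpow_le_rpow ht0 htc hpa.le
      calc t * t ^ (1/(α-1)) * c = t * c * t ^ (1/(α-1)) := by ring
        _ ≤ t * c * c ^ (1/(α-1)) := mul_le_mul_of_nonneg_left h1 (by positivity)
        _ = t * (c * c ^ (1/(α-1))) := by ring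

/-- The key scaling bound: `I(δL) ≤ δ·M·I(L)`. -/
lemma Iaux_scale (k : ℕ) (hk : 2 ≤ k) (α : ℝ) (hα : 1 < α)
    {δ L : ℝ} (hδ0 : 0 < δ) (hδ1 : δ ≤ 1) (hL : 0 < L) :
    Iaux k α (δ * L) ≤
      δ * max ((2 * δ) ^ (1 / ((k : ℝ) - 1))) ((2 * δ) ^ (1 / (α - 1))) * Iaux k α L := by
  set M := max ((2 * δ) ^ (1 / ((k : ℝ) - 1))) ((2 * δ) ^ (1 / (α - 1))) with hM
  have hk2 : (2:ℝ) ≤ (k:ℝ) := by exact_mod_cast hk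
  have hkgt : (1:ℝ) < (k:ℝ) := by linarith
  have hkk : (0:ℝ) < (k:ℝ) - 1 := by linarith
  have haa : (0:ℝ) < α - 1 := by linarith
  have hpk : (0:ℝ) < 1 / ((k:ℝ) - 1) := by positivity
  have hpa : (0:ℝ) < 1 / (α - 1) := by positivity
  have hδ2 : δ ≤ 2 * δ := by linarith
  have hδk : δ ^ (1/((k:ℝ)-1)) ≤ M :=
    le_trans (Real.rpow_le_rpow hδ0.le hδ2 hpk.le) (le_max_left _ _)
  have hδa : δ ^ (1/(α-1)) ≤ M :=
    le_trans (Real.rpow_le_rpow hδ0.le hδ2 hpa.le) (le_max_right _ _)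
  have hdL : 0 < δ * L := mul_pos hδ0 hL
  by_cases hL1 : L ≤ 1
  · have hdL1 : δ * L ≤ 1 := by nlinarith
    have hIL : Iaux k α L = L ^ ((k:ℝ)/((k:ℝ)-1)) := by rw [Iaux, if_pos hL1]
    have hI : Iaux k α (δ * L) = δ ^ ((k:ℝ)/((k:ℝ)-1)) * L ^ ((k:ℝ)/((k:ℝ)-1)) := by
      rw [Iaux, if_pos hdL1, Real.mul_rpow hδ0.le hL.le]
    rw [hI, hIL, rpow_split hδ0 hkgt]
    exact mul_le_mul_of_nonneg_right (mul_le_mul_of_nonneg_left hδk hδ0.le)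
      (Real.rpow_nonneg hL.le _)
  · push_neg at hL1
    have hIL : Iaux k α L = L * L ^ (1/(α-1)) := by
      rw [Iaux, if_neg (not_le.mpr hL1), rpow_split hL hα]
    by_cases hdL1 : δ * L ≤ 1
    · -- hard case: δL ≤ 1 < L
      have hI : Iaux k α (δ * L) = (δ * L) * (δ * L) ^ (1/((k:ℝ)-1)) := by
        rw [Iaux, if_pos hdL1, rpow_split hdL hkgt]
      have key : (δ * L) ^ (1/((k:ℝ)-1)) ≤ M * L ^ (1/(α-1)) := by
        rcases le_or_gt α (k:ℝ) with hak | hak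
        · -- α ≤ k : 1/(k-1) ≤ 1/(α-1)
          have he : 1/((k:ℝ)-1) ≤ 1/(α-1) :=
            one_div_le_one_div_of_le haa (by linarith)
          calc (δ * L) ^ (1/((k:ℝ)-1))
              = δ ^ (1/((k:ℝ)-1)) * L ^ (1/((k:ℝ)-1)) :=
                Real.mul_rpow hδ0.le hL.le
            _ ≤ M * L ^ (1/(α-1)) := by
                apply mul_le_mul hδk
                  (Real.rpow_le_rpow_of_exponent_le hL1.le he)
                  (Real.rpow_nonneg hL.le _)
                exact le_trans (Real.rpow_nonneg hδ0.le _) hδk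
        · -- k < α : 1/(α-1) ≤ 1/(k-1)
          have he : 1/(α-1) ≤ 1/((k:ℝ)-1) :=
            one_div_le_one_div_of_le hkk (by linarith)
          calc (δ * L) ^ (1/((k:ℝ)-1))
              ≤ (δ * L) ^ (1/(α-1)) :=
                Real.rpow_le_rpow_of_exponent_ge hdL hdL1 he
            _ = δ ^ (1/(α-1)) * L ^ (1/(α-1)) := Real.mul_rpow hδ0.le hL.le
            _ ≤ M * L ^ (1/(α-1)) :=
                mul_le_mul_of_nonneg_right hδa (Real.rpow_nonneg hL.le _)
      rw [hI, hIL]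
      calc (δ * L) * (δ * L) ^ (1/((k:ℝ)-1))
          ≤ (δ * L) * (M * L ^ (1/(α-1))) :=
            mul_le_mul_of_nonneg_left key hdL.le
        _ = δ * M * (L * L ^ (1/(α-1))) := by ring
    · push_neg at hdL1
      have hI : Iaux k α (δ * L) = δ ^ (α/(α-1)) * L ^ (α/(α-1)) := by
        rw [Iaux, if_neg (not_le.mpr hdL1), Real.mul_rpow hδ0.le hL.le]
      have hLq : L ^ (α/(α-1)) = L * L ^ (1/(α-1)) := rpow_split hL hα
      rw [hI, hIL, ← hLq, rpow_split hδ0 hα]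
      exact mul_le_mul_of_nonneg_right (mul_le_mul_of_nonneg_left hδa hδ0.le)
        (Real.rpow_nonneg hL.le _)

theorem power_sum_lemma (k : ℕ) (hk : 2 ≤ k) (α : ℝ) (hα : 1 < α)
    (lam δ : ℝ) (hlam : lam ∈ Set.Ioc (0 : ℝ) 1) (hδ : δ ∈ Set.Ioc (0 : ℝ) 1)
    (L : ℝ) (hL : 0 < L) (t : ℕ → ℝ)
    (ht0 : ∀ i, 0 ≤ t i) (htδ : ∀ i, t i < δ * L)
    (hsum : Summable t) (hle : lam * ∑' i, t i ≤ L) :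
    Summable (fun i => Iaux k α (t i)) ∧
    ∑' i, Iaux k α (t i) ≤
      2 * (1 + δ * lam) / lam *
        max ((2 * δ) ^ (1 / ((k : ℝ) - 1))) ((2 * δ) ^ (1 / (α - 1))) * Iaux k α L := by
  obtain ⟨hlam0, hlam1⟩ := hlam
  obtain ⟨hδ0, hδ1⟩ := hδ
  set M := max ((2 * δ) ^ (1 / ((k : ℝ) - 1))) ((2 * δ) ^ (1 / (α - 1))) with hM
  have hM0 : 0 ≤ M := le_trans (Real.rpow_nonneg (by linarith) _) (le_max_left _ _)
  have hc : 0 < δ * L := mul_pos hδ0 hL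
  set c := δ * L with hcdef
  set C := Iaux k α c / c with hC
  have hC0 : 0 ≤ C := div_nonneg (Iaux_nonneg k α hc.le) hc.le
  have hIL0 : 0 ≤ Iaux k α L := Iaux_nonneg k α hL.le
  have hbound : ∀ i, Iaux k α (t i) ≤ t i * C := by
    intro i
    have h := Iaux_linear_bound k hk α hα hc (ht0 i) (htδ i).le
    have : Iaux k α (t i) ≤ t i * Iaux k α c / c := (le_div_iff₀ hc).mpr h
    rwa [mul_div_assoc] at this
  have hS : Summable (fun i => t i * C) := hsum.mul_right C
  have hsumI : Summable (fun i => Iaux k α (t i)) :=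
    Summable.of_nonneg_of_le (fun i => Iaux_nonneg k α (ht0 i)) hbound hS
  refine ⟨hsumI, ?_⟩
  have h1 : ∑' i, Iaux k α (t i) ≤ ∑' i, t i * C := Summable.tsum_le_tsum hbound hsumI hS
  rw [tsum_mul_right] at h1
  have hT0 : 0 ≤ ∑' i, t i := tsum_nonneg ht0
  have hTle : ∑' i, t i ≤ L / lam := by
    rw [le_div_iff₀ hlam0]; linarith [hle]
  have h2 : (∑' i, t i) * C ≤ (L / lam) * C :=
    mul_le_mul_of_nonneg_right hTle hC0
  have hscale : Iaux k α c ≤ δ * M * Iaux k α L := Iaux_scale k hk α hα hδ0 hδ1 hL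
  have h3 : C ≤ M * Iaux k α L / L := by
    rw [hC, div_le_div_iff₀ hc hL]
    calc Iaux k α c * L ≤ (δ * M * Iaux k α L) * L :=
          mul_le_mul_of_nonneg_right hscale hL.le
      _ = M * Iaux k α L * c := by rw [hcdef]; ring
  have h4 : (L / lam) * C ≤ (L / lam) * (M * Iaux k α L / L) :=
    mul_le_mul_of_nonneg_left h3 (by positivity)
  have h5 : (L / lam) * (M * Iaux k α L / L) = M * Iaux k α L / lam := by
    field_simp
  have h6 : M * Iaux k α L / lam ≤ 2 * (1 + δ * lam) / lam * M * Iaux k α L := by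
    have hR : 2 * (1 + δ * lam) / lam * M * Iaux k α L
        = (2 * (1 + δ * lam)) * (M * Iaux k α L) / lam := by ring
    rw [hR, div_le_div_iff₀ hlam0 hlam0]
    nlinarith [mul_nonneg (mul_nonneg hM0 hIL0) hlam0.le,
      mul_nonneg (mul_nonneg (mul_nonneg hM0 hIL0) hlam0.le) (mul_pos hδ0 hlam0).le]
  linarith [h1, h2, h4, h5.le, h6]
end

section
/- Let k ∈ ℕ with k ≥ 2, let α ∈ ℝ with α > 1, and let γ ∈ (0,∞). Then for every ν ≥ 0 and every r ≥ 0, min{(γν)^{1/k}, (γν)^{1/α}}·r ≤ G_{k,α}(ν·F_{k,α,γ}(r)) ≤ max{(γν)^{1/k}, (γν)^{1/α}}·r. -/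
/-- The auxiliary function `F_{k,α,γ}` from Wenger's paper (case `k ≥ 2`, `α > 1`):
`F_{k,α,γ}(r) = γ·r^k` for `0 ≤ r ≤ 1` and `γ·r^α` for `r > 1`. -/
noncomputable def Faux (k : ℕ) (α γ r : ℝ) : ℝ :=
  if r ≤ 1 then γ * r ^ (k : ℝ) else γ * r ^ α

/-- The auxiliary function `G_{k,α}` from Wenger's paper:
`G_{k,α}(r) = r^{1/k}` for `0 ≤ r ≤ 1` and `r^{1/α}` for `r > 1`. -/
noncomputable def Gaux (k : ℕ) (α r : ℝ) : ℝ :=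
  if r ≤ 1 then r ^ (1 / (k : ℝ)) else r ^ (1 / α)

theorem G_of_F_scaling (k : ℕ) (hk : 2 ≤ k) (α : ℝ) (hα : 1 < α) (γ : ℝ) (hγ : 0 < γ) :
    ∀ ν r : ℝ, 0 ≤ ν → 0 ≤ r →
      min ((γ * ν) ^ (1 / (k : ℝ))) ((γ * ν) ^ (1 / α)) * r ≤ Gaux k α (ν * Faux k α γ r) ∧
      Gaux k α (ν * Faux k α γ r) ≤ max ((γ * ν) ^ (1 / (k : ℝ))) ((γ * ν) ^ (1 / α)) * r := by
  intro ν r hν hr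
  have hk2 : (2:ℝ) ≤ (k:ℝ) := by exact_mod_cast hk
  have hk0 : (0:ℝ) < (k:ℝ) := by linarith
  have hα0 : (0:ℝ) < α := by linarith
  set c := γ * ν with hc_def
  have hc : 0 ≤ c := mul_nonneg hγ.le hν
  rw [min_mul_of_nonneg _ _ hr, max_mul_of_nonneg _ _ hr]
  set a := c ^ (1/(k:ℝ)) with ha_def
  set b := c ^ (1/α) with hb_def
  have ha0 : 0 ≤ a := Real.rpow_nonneg hc _
  have hb0 : 0 ≤ b := Real.rpow_nonneg hc _
  have hxr : ν * Faux k α γ r = c * (if r ≤ 1 then r ^ (k:ℝ) else r ^ α) := by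
    simp only [Faux]; split <;> ring
  rw [hxr]
  by_cases hc0 : c = 0
  · have h1k : (1/(k:ℝ)) ≠ 0 := by positivity
    have h1α : (1/α) ≠ 0 := by positivity
    rw [hc0, zero_mul]
    simp only [Gaux, if_pos zero_le_one]
    rw [Real.zero_rpow h1k, ha_def, hb_def, hc0, Real.zero_rpow h1k,
      Real.zero_rpow h1α, zero_mul, min_self, max_self]
    exact ⟨le_refl 0, le_refl 0⟩
  have hcpos : 0 < c := lt_of_le_of_ne hc (Ne.symm hc0)
  by_cases hr1 : r ≤ 1
  · -- r ≤ 1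
    rw [if_pos hr1]
    set x := c * r ^ (k:ℝ) with hx_def
    have hx0 : 0 ≤ x := mul_nonneg hc (Real.rpow_nonneg hr _)
    have hxk : x ^ (1/(k:ℝ)) = a * r := by
      rw [hx_def, Real.mul_rpow hc (Real.rpow_nonneg hr _), ← Real.rpow_mul hr,
        mul_one_div_cancel (ne_of_gt hk0), Real.rpow_one]
    by_cases hx1 : x ≤ 1
    · simp only [Gaux, if_pos hx1]
      rw [hxk]
      exact ⟨min_le_left _ _, le_max_left _ _⟩
    · have hx1' : 1 < x := lt_of_not_ge hx1
      have hr0 : 0 < r := by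
        rcases hr.lt_or_eq with h | h
        · exact h
        · exfalso
          rw [← h, Real.zero_rpow (ne_of_gt hk0), mul_zero] at hx_def
          rw [hx_def] at hx1'; linarith
      have hxα : x ^ (1/α) = b * r ^ ((k:ℝ)/α) := by
        rw [hx_def, Real.mul_rpow hc (Real.rpow_nonneg hr _), ← Real.rpow_mul hr,
          mul_one_div]
      simp only [Gaux, if_neg hx1]
      rcases le_total α (k:ℝ) with hαk | hαk
      · constructor
        · refine le_trans (min_le_left _ _) ?_
          rw [← hxk]
          exact Real.rpow_le_rpow_of_exponent_le hx1'.le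
            (one_div_le_one_div_of_le hα0 hαk)
        · rw [hxα]
          refine le_trans ?_ (le_max_right _ _)
          refine mul_le_mul_of_nonneg_left ?_ hb0
          calc r ^ ((k:ℝ)/α) ≤ r ^ (1:ℝ) :=
                Real.rpow_le_rpow_of_exponent_ge hr0 hr1
                  (by rw [le_div_iff₀ hα0]; linarith)
            _ = r := Real.rpow_one r
      · constructor
        · refine le_trans (min_le_right _ _) ?_
          rw [hxα]
          refine mul_le_mul_of_nonneg_left ?_ hb0
          calc r = r ^ (1:ℝ) := (Real.rpow_one r).symm
            _ ≤ r ^ ((k:ℝ)/α) :=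
                Real.rpow_le_rpow_of_exponent_ge hr0 hr1
                  (by rw [div_le_one hα0]; linarith)
        · refine le_trans ?_ (le_max_left _ _)
          rw [← hxk]
          exact Real.rpow_le_rpow_of_exponent_le hx1'.le
            (one_div_le_one_div_of_le hk0 hαk)
  · -- 1 < r
    rw [if_neg hr1]
    have hr1' : 1 < r := lt_of_not_ge hr1
    have hr0 : 0 < r := lt_trans one_pos hr1'
    set x := c * r ^ α with hx_def
    have hxpos : 0 < x := mul_pos hcpos (Real.rpow_pos_of_pos hr0 _)
    have hxα : x ^ (1/α) = b * r := by
      rw [hx_def, Real.mul_rpow hc (Real.rpow_nonneg hr _), ← Real.rpow_mul hr,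
        mul_one_div_cancel (ne_of_gt hα0), Real.rpow_one]
    have hxk : x ^ (1/(k:ℝ)) = a * r ^ (α/(k:ℝ)) := by
      rw [hx_def, Real.mul_rpow hc (Real.rpow_nonneg hr _), ← Real.rpow_mul hr,
        mul_one_div]
    by_cases hx1 : x ≤ 1
    · simp only [Gaux, if_pos hx1]
      rcases le_total α (k:ℝ) with hαk | hαk
      · constructor
        · refine le_trans (min_le_right _ _) ?_
          rw [← hxα]
          exact Real.rpow_le_rpow_of_exponent_ge hxpos hx1
            (one_div_le_one_div_of_le hα0 hαk)
        · rw [hxk]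
          refine le_trans ?_ (le_max_left _ _)
          refine mul_le_mul_of_nonneg_left ?_ ha0
          calc r ^ (α/(k:ℝ)) ≤ r ^ (1:ℝ) :=
                Real.rpow_le_rpow_of_exponent_le hr1'.le
                  (by rw [div_le_one hk0]; linarith)
            _ = r := Real.rpow_one r
      · constructor
        · refine le_trans (min_le_left _ _) ?_
          rw [hxk]
          refine mul_le_mul_of_nonneg_left ?_ ha0
          calc r = r ^ (1:ℝ) := (Real.rpow_one r).symm
            _ ≤ r ^ (α/(k:ℝ)) :=
                Real.rpow_le_rpow_of_exponent_le hr1'.le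
                  (by rw [le_div_iff₀ hk0]; linarith)
        · refine le_trans ?_ (le_max_right _ _)
          rw [← hxα]
          exact Real.rpow_le_rpow_of_exponent_ge hxpos hx1
            (one_div_le_one_div_of_le hk0 hαk)
    · simp only [Gaux, if_neg hx1]
      rw [hxα]
      exact ⟨min_le_right _ _, le_max_right _ _⟩
end

section
/- Let k ∈ ℕ with k ≥ 2, let α ∈ ℝ with α > 1, and let γ ∈ (0,1). Then for every real μ with 1 ≤ μ ≤ 1/γ and every r ≥ 0, I_{k,α}(μ·H_{k,α,γ}(r)) ≤ μ·max{(μγ)^{1/(k-1)}, (μγ)^{1/(α-1)}}·r. -/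
/-- The auxiliary function `H_{k,α,γ}` from Wenger's paper (case `k ≥ 2`, `α > 1`):
`H_{k,α,γ}(r) = γ^{1/k}·r^{(k-1)/k}` for `0 ≤ r ≤ γ` and `γ^{1/α}·r^{(α-1)/α}` for `r > γ`. -/
noncomputable def Haux (k : ℕ) (α γ r : ℝ) : ℝ :=
  if r ≤ γ then γ ^ (1 / (k : ℝ)) * r ^ (((k : ℝ) - 1) / (k : ℝ))
  else γ ^ (1 / α) * r ^ ((α - 1) / α)

private lemma expand_aux (p μ γ x : ℝ) (hp : 1 < p) (hμ : 0 < μ) (hγ : 0 < γ) (hx : 0 ≤ x) :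
    (μ * (γ ^ (1/p) * x ^ ((p-1)/p))) ^ (p/(p-1)) = μ * (μ*γ) ^ (1/(p-1)) * x := by
  have hp0 : p ≠ 0 := by linarith
  have hp1 : p - 1 ≠ 0 := by linarith
  rw [Real.mul_rpow hμ.le (by positivity), Real.mul_rpow (by positivity) (by positivity),
    ← Real.rpow_mul hγ.le, ← Real.rpow_mul hx]
  have e1 : 1/p * (p/(p-1)) = 1/(p-1) := by field_simp
  have e2 : (p-1)/p * (p/(p-1)) = 1 := by field_simp
  have e3 : p/(p-1) = 1 + 1/(p-1) := by field_simp; ring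
  rw [e1, e2, e3, Real.rpow_add hμ, Real.rpow_one, Real.rpow_one,
    Real.mul_rpow hμ.le hγ.le]
  ring

theorem I_of_H_bound (k : ℕ) (hk : 2 ≤ k) (α : ℝ) (hα : 1 < α) (γ : ℝ)
    (hγ : γ ∈ Set.Ioo (0 : ℝ) 1) :
    ∀ μ : ℝ, 1 ≤ μ → μ ≤ 1 / γ → ∀ r : ℝ, 0 ≤ r →
      Iaux k α (μ * Haux k α γ r) ≤
        μ * max ((μ * γ) ^ (1 / ((k : ℝ) - 1))) ((μ * γ) ^ (1 / (α - 1))) * r := by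
  obtain ⟨hγ0, hγ1⟩ := hγ
  have hK : (1:ℝ) < (k:ℝ) := by exact_mod_cast Nat.lt_of_lt_of_le one_lt_two hk
  have hK0 : (k:ℝ) ≠ 0 := by linarith
  intro μ hμ1 hμγ r hr
  have hμ0 : 0 < μ := lt_of_lt_of_le one_pos hμ1
  have hμγ1 : μ * γ ≤ 1 := by
    have := mul_le_mul_of_nonneg_right hμγ hγ0.le
    rwa [one_div_mul_cancel hγ0.ne'] at this
  set M := max ((μ * γ) ^ (1 / ((k:ℝ) - 1))) ((μ * γ) ^ (1 / (α - 1))) with hM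
  have bndk : μ * (μ*γ) ^ (1/((k:ℝ)-1)) * r ≤ μ * M * r :=
    mul_le_mul_of_nonneg_right (mul_le_mul_of_nonneg_left (le_max_left _ _) hμ0.le) hr
  have bndα : μ * (μ*γ) ^ (1/(α-1)) * r ≤ μ * M * r :=
    mul_le_mul_of_nonneg_right (mul_le_mul_of_nonneg_left (le_max_right _ _) hμ0.le) hr
  by_cases hrγ : r ≤ γ
  · -- small-r case
    have hH : Haux k α γ r = γ ^ (1/(k:ℝ)) * r ^ (((k:ℝ) - 1)/(k:ℝ)) := if_pos hrγ
    have hle1 : μ * Haux k α γ r ≤ 1 := by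
      rw [hH]
      calc μ * (γ ^ (1/(k:ℝ)) * r ^ (((k:ℝ) - 1)/(k:ℝ)))
          ≤ μ * (γ ^ (1/(k:ℝ)) * γ ^ (((k:ℝ) - 1)/(k:ℝ))) := by
            refine mul_le_mul_of_nonneg_left (mul_le_mul_of_nonneg_left ?_ (by positivity)) hμ0.le
            exact Real.rpow_le_rpow hr hrγ (div_nonneg (by linarith) (by linarith))
        _ = μ * γ := by
            rw [← Real.rpow_add hγ0]
            have : 1/(k:ℝ) + ((k:ℝ) - 1)/(k:ℝ) = 1 := by field_simp; ring
            rw [this, Real.rpow_one]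
        _ ≤ 1 := hμγ1
    rw [Iaux, if_pos hle1, hH, expand_aux (k:ℝ) μ γ r hK hμ0 hγ0 hr]
    exact bndk
  · -- large-r case
    push_neg at hrγ
    have hr0 : 0 < r := lt_trans hγ0 hrγ
    have hH : Haux k α γ r = γ ^ (1/α) * r ^ ((α - 1)/α) := if_neg (not_le.mpr hrγ)
    have hα0 : α ≠ 0 := by linarith
    by_cases hle1 : μ * Haux k α γ r ≤ 1
    · rw [Iaux, if_pos hle1]
      rcases le_total α (k:ℝ) with hαk | hαk
      · -- α ≤ k : compare H with the k-branch formula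
        have key : γ ^ (1/α) * r ^ ((α - 1)/α) ≤ γ ^ (1/(k:ℝ)) * r ^ (((k:ℝ) - 1)/(k:ℝ)) := by
          set e : ℝ := ((k:ℝ) - α) / (α * (k:ℝ)) with he
          have he0 : 0 ≤ e := div_nonneg (by linarith) (by positivity)
          have h1 : 1/α = 1/(k:ℝ) + e := by rw [he]; field_simp; try ring
          have h2 : ((k:ℝ) - 1)/(k:ℝ) = e + (α - 1)/α := by rw [he]; field_simp; try ring
          rw [h1, h2, Real.rpow_add hγ0, Real.rpow_add hr0]
          calc γ ^ (1/(k:ℝ)) * γ ^ e * r ^ ((α-1)/α)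
              ≤ γ ^ (1/(k:ℝ)) * r ^ e * r ^ ((α-1)/α) := by
                refine mul_le_mul_of_nonneg_right
                  (mul_le_mul_of_nonneg_left ?_ (by positivity)) (by positivity)
                exact Real.rpow_le_rpow hγ0.le hrγ.le he0
            _ = γ ^ (1/(k:ℝ)) * (r ^ e * r ^ ((α-1)/α)) := by ring
        calc (μ * Haux k α γ r) ^ ((k:ℝ)/((k:ℝ)-1))
            ≤ (μ * (γ ^ (1/(k:ℝ)) * r ^ (((k:ℝ) - 1)/(k:ℝ)))) ^ ((k:ℝ)/((k:ℝ)-1)) := by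
              refine Real.rpow_le_rpow (by rw [hH]; positivity) ?_
                (div_nonneg (by linarith) (by linarith))
              rw [hH]; exact mul_le_mul_of_nonneg_left key hμ0.le
          _ = μ * (μ*γ) ^ (1/((k:ℝ)-1)) * r := expand_aux (k:ℝ) μ γ r hK hμ0 hγ0 hr
          _ ≤ μ * M * r := bndk
      · -- k ≤ α : exponent comparison
        have hx0 : 0 < μ * Haux k α γ r := by rw [hH]; positivity
        have hexp : α/(α-1) ≤ (k:ℝ)/((k:ℝ)-1) := by
          rw [div_le_div_iff₀ (by linarith) (by linarith)]
          nlinarith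
        calc (μ * Haux k α γ r) ^ ((k:ℝ)/((k:ℝ)-1))
            ≤ (μ * Haux k α γ r) ^ (α/(α-1)) :=
              Real.rpow_le_rpow_of_exponent_ge hx0 hle1 hexp
          _ = μ * (μ*γ) ^ (1/(α-1)) * r := by
              rw [hH]; exact expand_aux α μ γ r hα hμ0 hγ0 hr
          _ ≤ μ * M * r := bndα
    · rw [Iaux, if_neg hle1, hH, expand_aux α μ γ r hα hμ0 hγ0 hr]
      exact bndα
end

section
/- Let k ∈ ℕ with k ≥ 2, let α ∈ ℝ with α > 1, and let D ≥ 1 be a real number. Set α₁ := max{k, α}. Let R ∈ (0,∞], and let β : [0,R) → [0,∞) be a non-decreasing function with β(r) > 0 for every r ∈ (0,R), such that for Lebesgue-almost every r ∈ (0,R) the function β is differentiable at r and satisfies β(r) ≤ 3D·I_{k,α}(β'(r)). Then for every r ∈ (0,R): β(r) ≥ r^k/((3D)^{k-1}·α₁^k) if r ≤ 3D·α₁, and β(r) ≥ r^α/((3D)^{α-1}·α₁^α) if r > 3D·α₁. In particular, with μ := min{1/((3D)^{k-1}·α₁^k), 1/((3D)^{α-1}·α₁^α)}, one has β(r) ≥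 F_{k,α,μ}(r) for every r ∈ [0,R). -/
open MeasureTheory ENNReal

open Set Filter Topology

/-- The comparison function `ψ` used in the proof: `ψ(t) = A·c^{(k-1)/k}·t^{1/k}` for `t ≤ c`
and `A·c^{(α-1)/α}·t^{1/α}` for `t > c`. -/
noncomputable def psiAux (k : ℕ) (α c A t : ℝ) : ℝ :=
  if t ≤ c then A * c ^ (((k:ℝ) - 1)/(k:ℝ)) * t ^ (1/(k:ℝ))
  else A * c ^ ((α - 1)/α) * t ^ (1/α)

lemma psiAux_nonneg (k : ℕ) (α : ℝ) {c A t : ℝ} (hA : 0 ≤ A) (hc : 0 ≤ c) (ht : 0 ≤ t) :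
    0 ≤ psiAux k α c A t := by
  unfold psiAux; split <;> positivity

lemma psiAux_monoOn (k : ℕ) (hk : 2 ≤ k) {α c A : ℝ} (hα : 1 < α) (hc : 0 < c)
    (hA : 0 ≤ A) : MonotoneOn (psiAux k α c A) (Set.Ici 0) := by
  have hK : (2:ℝ) ≤ (k:ℝ) := by exact_mod_cast hk
  have hK0 : (0:ℝ) < (k:ℝ) := by linarith
  have hα0 : (0:ℝ) < α := by linarith
  have hcc : c ^ (((k:ℝ) - 1)/(k:ℝ)) * c ^ (1/(k:ℝ)) = c := by
    rw [← Real.rpow_add hc]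
    have : ((k:ℝ) - 1)/(k:ℝ) + 1/(k:ℝ) = 1 := by field_simp; ring
    rw [this, Real.rpow_one]
  have hcc' : c ^ ((α - 1)/α) * c ^ (1/α) = c := by
    rw [← Real.rpow_add hc]
    have : (α - 1)/α + 1/α = 1 := by field_simp; ring
    rw [this, Real.rpow_one]
  intro s hs t ht hst
  simp only [Set.mem_Ici] at hs ht
  unfold psiAux
  rcases le_or_gt t c with htc | htc
  · rw [if_pos (hst.trans htc), if_pos htc]
    have := Real.rpow_le_rpow hs hst (by positivity : (0:ℝ) ≤ 1/(k:ℝ))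
    have h1 : (0:ℝ) ≤ A * c ^ (((k:ℝ) - 1)/(k:ℝ)) := by positivity
    exact mul_le_mul_of_nonneg_left this h1
  · rcases le_or_gt s c with hsc | hsc
    · rw [if_pos hsc, if_neg (not_le.mpr htc)]
      calc A * c ^ (((k:ℝ) - 1)/(k:ℝ)) * s ^ (1/(k:ℝ))
          ≤ A * c ^ (((k:ℝ) - 1)/(k:ℝ)) * c ^ (1/(k:ℝ)) := by
            have := Real.rpow_le_rpow hs hsc (by positivity : (0:ℝ) ≤ 1/(k:ℝ))
            exact mul_le_mul_of_nonneg_left this (by positivity)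
        _ = A * c := by rw [mul_assoc, hcc]
        _ = A * c ^ ((α - 1)/α) * c ^ (1/α) := by rw [mul_assoc, hcc']
        _ ≤ A * c ^ ((α - 1)/α) * t ^ (1/α) := by
            have := Real.rpow_le_rpow hc.le htc.le (by positivity : (0:ℝ) ≤ 1/α)
            exact mul_le_mul_of_nonneg_left this (by positivity)
    · rw [if_neg (not_le.mpr hsc), if_neg (not_le.mpr htc)]
      have := Real.rpow_le_rpow hs hst (by positivity : (0:ℝ) ≤ 1/α)
      exact mul_le_mul_of_nonneg_left this (by positivity)

lemma mono_deriv_nonneg {f : ℝ → ℝ} (hf : Monotone f) {d x : ℝ}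
    (h : HasDerivAt f d x) : 0 ≤ d := by
  have h2 : Tendsto (slope f x) (𝓝[>] x) (𝓝 d) :=
    (hasDerivAt_iff_tendsto_slope.mp h).mono_left
      (nhdsWithin_mono x fun y hy => ne_of_gt hy)
  refine ge_of_tendsto h2 ?_
  filter_upwards [self_mem_nhdsWithin] with y hy
  rw [slope_def_field]
  exact div_nonneg (sub_nonneg.2 (hf (le_of_lt hy))) (sub_nonneg.2 (le_of_lt hy))

lemma aux_mono_growth (h : ℝ → ℝ) (hmono : Monotone h) (ε r₀ : ℝ) (hεr : ε ≤ r₀)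
    (hae : ∀ᵐ x, x ∈ Set.Ioo ε r₀ → DifferentiableAt ℝ h x ∧ 1 ≤ deriv h x) :
    r₀ - ε ≤ h (r₀ + 1) - h ε := by
  set μ := hmono.stieltjesFunction.measure with hμ
  have key : ∀ᵐ x, x ∈ Set.Ioo ε r₀ → (1 : ℝ≥0∞) ≤ μ.rnDeriv volume x := by
    filter_upwards [hae, hmono.ae_hasDerivAt] with x hx hd hmem
    have h1 : deriv h x = (μ.rnDeriv volume x).toReal := hd.deriv
    have h2 : (1:ℝ) ≤ (μ.rnDeriv volume x).toReal := h1 ▸ (hx hmem).2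
    calc (1 : ℝ≥0∞) = ENNReal.ofReal 1 := by simp
    _ ≤ ENNReal.ofReal (μ.rnDeriv volume x).toReal := ENNReal.ofReal_le_ofReal h2
    _ ≤ μ.rnDeriv volume x := ENNReal.ofReal_toReal_le
  have step : ENNReal.ofReal (r₀ - ε) ≤ μ (Set.Ioc ε r₀) := by
    have e1 : ENNReal.ofReal (r₀ - ε) = ∫⁻ _ in Set.Ioo ε r₀, 1 ∂volume := by
      simp [Real.volume_Ioo]
    rw [e1]
    refine le_trans (le_trans ?_ (Measure.setLIntegral_rnDeriv_le (μ := μ) (ν := volume) _))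
      (measure_mono Set.Ioo_subset_Ioc_self)
    refine setLIntegral_mono_ae' measurableSet_Ioo ?_
    filter_upwards [key] with x hx hmem using hx hmem
  rw [hμ, StieltjesFunction.measure_Ioc] at step
  have h0 : (0:ℝ) ≤ hmono.stieltjesFunction r₀ - hmono.stieltjesFunction ε :=
    sub_nonneg.mpr (hmono.stieltjesFunction.mono hεr)
  rw [ENNReal.ofReal_le_ofReal_iff h0] at step
  have e2 : hmono.stieltjesFunction r₀ ≤ h (r₀ + 1) := by
    rw [hmono.stieltjesFunction_eq]
    exact hmono.rightLim_le (by linarith)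
  have e3 : h ε ≤ hmono.stieltjesFunction ε := by
    rw [hmono.stieltjesFunction_eq]
    exact hmono.le_rightLim le_rfl
  linarith

lemma psi_comp_deriv (k : ℕ) (hk : 2 ≤ k) {α c A : ℝ} (hα : 1 < α) (hc : 3 ≤ c)
    (hAk : (k:ℝ) ≤ A) (hAα : α ≤ A) (β : ℝ → ℝ) (x : ℝ)
    (hdiff : DifferentiableAt ℝ β x) (hd0 : 0 ≤ deriv β x) (hb0 : 0 < β x)
    (hbne : β x ≠ c) (hineq : β x ≤ c * Iaux k α (deriv β x)) :
    DifferentiableAt ℝ (fun y => psiAux k α c A (β y)) x ∧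
      1 ≤ deriv (fun y => psiAux k α c A (β y)) x := by
  have hK : (2:ℝ) ≤ (k:ℝ) := by exact_mod_cast hk
  have hK0 : (0:ℝ) < (k:ℝ) := by linarith
  have hK1 : (0:ℝ) < (k:ℝ) - 1 := by linarith
  have hα0 : (0:ℝ) < α := by linarith
  have hα1 : (0:ℝ) < α - 1 := by linarith
  have hc0 : (0:ℝ) < c := by linarith
  have hA0 : (0:ℝ) < A := lt_of_lt_of_le hK0 hAk
  set b := β x with hb
  set d := deriv β x with hd
  rcases hbne.lt_or_gt with hbc | hbc
  · set p := ((k:ℝ) - 1)/(k:ℝ) with hp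
    have hp0 : 0 ≤ p := by positivity
    have hdge : (b/c) ^ p ≤ d := by
      rcases le_or_gt d 1 with hd1 | hd1
      · have hI : Iaux k α d = d ^ ((k:ℝ)/((k:ℝ) - 1)) := if_pos hd1
        rw [hI] at hineq
        have h1 : b / c ≤ d ^ ((k:ℝ)/((k:ℝ) - 1)) := (div_le_iff₀ hc0).mpr (by linarith)
        have h2 : (b/c) ^ p ≤ (d ^ ((k:ℝ)/((k:ℝ) - 1))) ^ p :=
          Real.rpow_le_rpow (by positivity) h1 hp0
        have h3 : (d ^ ((k:ℝ)/((k:ℝ) - 1))) ^ p = d := by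
          rw [← Real.rpow_mul hd0]
          have he : (k:ℝ)/((k:ℝ) - 1) * p = 1 := by rw [hp]; field_simp
          rw [he, Real.rpow_one]
        exact h3 ▸ h2
      · refine le_trans (Real.rpow_le_one (by positivity) ?_ hp0) hd1.le
        exact (div_le_one hc0).mpr hbc.le
    have hpsi : HasDerivAt (psiAux k α c A)
        (A * c ^ p * (1/(k:ℝ) * b ^ (1/(k:ℝ) - 1))) b := by
      have h1 : HasDerivAt (fun t : ℝ => A * c ^ p * t ^ (1/(k:ℝ)))
          (A * c ^ p * (1/(k:ℝ) * b ^ (1/(k:ℝ) - 1))) b :=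
        (Real.hasDerivAt_rpow_const (Or.inl (ne_of_gt hb0))).const_mul _
      refine h1.congr_of_eventuallyEq ?_
      filter_upwards [Iio_mem_nhds hbc] with t ht
      exact if_pos (le_of_lt ht)
    have hcomp : HasDerivAt (fun y => psiAux k α c A (β y))
        (A * c ^ p * (1/(k:ℝ) * b ^ (1/(k:ℝ) - 1)) * d) x :=
      hpsi.comp x hdiff.hasDerivAt
    refine ⟨hcomp.differentiableAt, ?_⟩
    rw [hcomp.deriv]
    have hfac : 0 ≤ A * c ^ p * (1/(k:ℝ) * b ^ (1/(k:ℝ) - 1)) := by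
      have := Real.rpow_pos_of_pos hc0 p
      have := Real.rpow_pos_of_pos hb0 (1/(k:ℝ) - 1)
      positivity
    have key : A * c ^ p * (1/(k:ℝ) * b ^ (1/(k:ℝ) - 1)) * ((b/c) ^ p) = A / (k:ℝ) := by
      rw [Real.div_rpow hb0.le hc0.le]
      have hbb : b ^ (1/(k:ℝ) - 1) * b ^ p = 1 := by
        rw [← Real.rpow_add hb0]
        have he : 1/(k:ℝ) - 1 + p = 0 := by rw [hp]; field_simp; ring
        rw [he, Real.rpow_zero]
      have hcne : c ^ p ≠ 0 := ne_of_gt (Real.rpow_pos_of_pos hc0 _)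
      have e : A * c ^ p * (1/(k:ℝ) * b ^ (1/(k:ℝ) - 1)) * (b ^ p / c ^ p)
          = (A / (k:ℝ)) * (b ^ (1/(k:ℝ) - 1) * b ^ p) * (c ^ p / c ^ p) := by ring
      rw [e, hbb, div_self hcne, mul_one, mul_one]
    have h4 : A / (k:ℝ) ≤ A * c ^ p * (1/(k:ℝ) * b ^ (1/(k:ℝ) - 1)) * d := by
      rw [← key]; exact mul_le_mul_of_nonneg_left hdge hfac
    have hAK : 1 ≤ A / (k:ℝ) := (one_le_div hK0).mpr hAk
    linarith
  · set p := (α - 1)/α with hp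
    have hp0 : 0 ≤ p := by positivity
    have hdge : (b/c) ^ p ≤ d := by
      rcases le_or_gt d 1 with hd1 | hd1
      · exfalso
        have hI : Iaux k α d = d ^ ((k:ℝ)/((k:ℝ) - 1)) := if_pos hd1
        rw [hI] at hineq
        have h1 : d ^ ((k:ℝ)/((k:ℝ) - 1)) ≤ 1 :=
          Real.rpow_le_one hd0 hd1 (by positivity)
        nlinarith
      · have hI : Iaux k α d = d ^ (α/(α - 1)) := if_neg (not_le.mpr hd1)
        rw [hI] at hineq
        have h1 : b / c ≤ d ^ (α/(α - 1)) := (div_le_iff₀ hc0).mpr (by linarith)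
        have h2 : (b/c) ^ p ≤ (d ^ (α/(α - 1))) ^ p :=
          Real.rpow_le_rpow (by positivity) h1 hp0
        have h3 : (d ^ (α/(α - 1))) ^ p = d := by
          rw [← Real.rpow_mul hd0]
          have he : α/(α - 1) * p = 1 := by rw [hp]; field_simp
          rw [he, Real.rpow_one]
        exact h3 ▸ h2
    have hpsi : HasDerivAt (psiAux k α c A)
        (A * c ^ p * (1/α * b ^ (1/α - 1))) b := by
      have h1 : HasDerivAt (fun t : ℝ => A * c ^ p * t ^ (1/α))
          (A * c ^ p * (1/α * b ^ (1/α - 1))) b :=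
        (Real.hasDerivAt_rpow_const (Or.inl (ne_of_gt hb0))).const_mul _
      refine h1.congr_of_eventuallyEq ?_
      filter_upwards [Ioi_mem_nhds hbc] with t ht
      exact if_neg (not_le.mpr ht)
    have hcomp : HasDerivAt (fun y => psiAux k α c A (β y))
        (A * c ^ p * (1/α * b ^ (1/α - 1)) * d) x :=
      hpsi.comp x hdiff.hasDerivAt
    refine ⟨hcomp.differentiableAt, ?_⟩
    rw [hcomp.deriv]
    have hfac : 0 ≤ A * c ^ p * (1/α * b ^ (1/α - 1)) := by
      have := Real.rpow_pos_of_pos hc0 p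
      have := Real.rpow_pos_of_pos hb0 (1/α - 1)
      positivity
    have key : A * c ^ p * (1/α * b ^ (1/α - 1)) * ((b/c) ^ p) = A / α := by
      rw [Real.div_rpow hb0.le hc0.le]
      have hbb : b ^ (1/α - 1) * b ^ p = 1 := by
        rw [← Real.rpow_add hb0]
        have he : 1/α - 1 + p = 0 := by rw [hp]; field_simp; ring
        rw [he, Real.rpow_zero]
      have hcne : c ^ p ≠ 0 := ne_of_gt (Real.rpow_pos_of_pos hc0 _)
      have e : A * c ^ p * (1/α * b ^ (1/α - 1)) * (b ^ p / c ^ p)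
          = (A / α) * (b ^ (1/α - 1) * b ^ p) * (c ^ p / c ^ p) := by ring
      rw [e, hbb, div_self hcne, mul_one, mul_one]
    have h4 : A / α ≤ A * c ^ p * (1/α * b ^ (1/α - 1)) * d := by
      rw [← key]; exact mul_le_mul_of_nonneg_left hdge hfac
    have hAα' : 1 ≤ A / α := (one_le_div hα0).mpr hAα
    linarith
/-- The growth estimate from the proof of Proposition 3.2 in Wenger's paper: a positive
non-decreasing function `β` on `[0,R)` (with `R ∈ (0,∞]`) satisfying the differential
inequality `β(r) ≤ 3D·I_{k,α}(β'(r))` almost everywhere grows at least like `F_{k,α,μ}`. -/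
theorem growth_estimate (k : ℕ) (hk : 2 ≤ k) (α : ℝ) (hα : 1 < α)
    (D : ℝ) (hD : 1 ≤ D) (R : ℝ≥0∞) (hR : 0 < R) (β : ℝ → ℝ)
    (hmono : MonotoneOn β {r : ℝ | 0 ≤ r ∧ ENNReal.ofReal r < R})
    (hnonneg : ∀ r : ℝ, 0 ≤ r → ENNReal.ofReal r < R → 0 ≤ β r)
    (hpos : ∀ r : ℝ, 0 < r → ENNReal.ofReal r < R → 0 < β r)
    (hae : ∀ᵐ r ∂(volume.restrict {r : ℝ | 0 < r ∧ ENNReal.ofReal r < R}),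
      DifferentiableAt ℝ β r ∧ β r ≤ 3 * D * Iaux k α (deriv β r)) :
    (∀ r : ℝ, 0 < r → ENNReal.ofReal r < R →
      (r ≤ 3 * D * max (k : ℝ) α →
        r ^ (k : ℝ) / ((3 * D) ^ ((k : ℝ) - 1) * (max (k : ℝ) α) ^ (k : ℝ)) ≤ β r) ∧
      (3 * D * max (k : ℝ) α < r →
        r ^ α / ((3 * D) ^ (α - 1) * (max (k : ℝ) α) ^ α) ≤ β r)) ∧
    (∀ r : ℝ, 0 ≤ r → ENNReal.ofReal r < R →
      Faux k α
        (min (1 / ((3 * D) ^ ((k : ℝ) - 1) * (max (k : ℝ) α) ^ (k : ℝ)))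
             (1 / ((3 * D) ^ (α - 1) * (max (k : ℝ) α) ^ α))) r ≤ β r) := by
  have hK : (2:ℝ) ≤ (k:ℝ) := by exact_mod_cast hk
  have hK0 : (0:ℝ) < (k:ℝ) := by linarith
  have hK1 : (0:ℝ) < (k:ℝ) - 1 := by linarith
  have hα0 : (0:ℝ) < α := by linarith
  set c := 3 * D with hcdef
  set A := max ((k:ℝ)) α with hAdef
  have hc : (3:ℝ) ≤ c := by rw [hcdef]; linarith
  have hc0 : (0:ℝ) < c := by linarith
  have hAk : (k:ℝ) ≤ A := le_max_left _ _
  have hAα : α ≤ A := le_max_right _ _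
  have hA0 : (0:ℝ) < A := lt_of_lt_of_le hK0 hAk
  have hA2 : (2:ℝ) ≤ A := le_trans hK hAk
  -- Main estimate: `r ≤ ψ(β r)` on `(0, R)`.
  have main : ∀ r : ℝ, 0 < r → ENNReal.ofReal r < R → r ≤ psiAux k α c A (β r) := by
    intro r hr hrR
    refine le_of_forall_pos_le_add fun ε hε => ?_
    rcases le_or_gt r ε with hre | hre
    · have := psiAux_nonneg k α hA0.le hc0.le (hnonneg r hr.le hrR)
      linarith
    · set g := fun x : ℝ => psiAux k α c A (β (min (max x ε) r)) with hgdef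
      have hclamp : ∀ x : ℝ, min (max x ε) r ∈ Icc ε r :=
        fun x => ⟨le_min (le_max_right _ _) hre.le, min_le_right _ _⟩
      have hIccS : ∀ {y : ℝ}, y ∈ Icc ε r → y ∈ {s : ℝ | 0 ≤ s ∧ ENNReal.ofReal s < R} :=
        fun hy => ⟨le_trans hε.le hy.1,
          lt_of_le_of_lt (ENNReal.ofReal_le_ofReal hy.2) hrR⟩
      have hβc_mono : Monotone (fun y : ℝ => β (min (max y ε) r)) := by
        intro x y hxy
        exact hmono (hIccS (hclamp x)) (hIccS (hclamp y))
          (min_le_min (max_le_max hxy le_rfl) le_rfl)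
      have hβcnn : ∀ x : ℝ, 0 ≤ β (min (max x ε) r) := by
        intro x
        have h := hIccS (hclamp x)
        exact hnonneg _ h.1 h.2
      have hg_mono : Monotone g := by
        intro x y hxy
        exact psiAux_monoOn k hk hα hc0 hA0.le (hβcnn x) (hβcnn y) (hβc_mono hxy)
      have heq : ∀ x ∈ Ioo ε r, (fun y : ℝ => β (min (max y ε) r)) =ᶠ[𝓝 x] β := by
        intro x hx
        filter_upwards [Ioo_mem_nhds hx.1 hx.2] with y hy
        rw [max_eq_left hy.1.le, min_eq_left hy.2.le]
      have hIooS' : Ioo ε r ⊆ {s : ℝ | 0 < s ∧ ENNReal.ofReal s < R} := fun x hx =>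
        ⟨lt_trans hε hx.1, lt_of_le_of_lt (ENNReal.ofReal_le_ofReal hx.2.le) hrR⟩
      have h1 : ∀ᵐ x, x ∈ Ioo ε r →
          DifferentiableAt ℝ β x ∧ β x ≤ c * Iaux k α (deriv β x) :=
        (ae_restrict_iff' measurableSet_Ioo).mp
          (ae_mono (Measure.restrict_mono hIooS' le_rfl) hae)
      -- the level set `{β = c}` cannot contain two points
      have hlevel0 : ∀ a b : ℝ, a ∈ Ioo ε r → b ∈ Ioo ε r → β a = c → β b = c →
          a < b → False := by
        intro a b ha hb hβa hβb hab
        have hIooab : Ioo a b ⊆ {s : ℝ | 0 < s ∧ ENNReal.ofReal s < R} := fun x hx =>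
          hIooS' ⟨lt_trans ha.1 hx.1, lt_trans hx.2 hb.2⟩
        have hconst : ∀ x ∈ Ioo a b, β x = c := by
          intro x hx
          have hxmem : x ∈ Icc ε r := ⟨(ha.1.trans hx.1).le, (hx.2.trans hb.2).le⟩
          have h₁ : β a ≤ β x := hmono (hIccS ⟨ha.1.le, ha.2.le⟩) (hIccS hxmem) hx.1.le
          have h₂ : β x ≤ β b := hmono (hIccS hxmem) (hIccS ⟨hb.1.le, hb.2.le⟩) hx.2.le
          rw [hβa] at h₁; rw [hβb] at h₂; linarith
        have hae2 : ∀ᵐ x, x ∈ Ioo a b →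
            DifferentiableAt ℝ β x ∧ β x ≤ c * Iaux k α (deriv β x) :=
          (ae_restrict_iff' measurableSet_Ioo).mp
            (ae_mono (Measure.restrict_mono hIooab le_rfl) hae)
        have hvol : volume (Ioo a b) ≠ 0 := by
          rw [Real.volume_Ioo]
          exact (ENNReal.ofReal_pos.mpr (by linarith)).ne'
        obtain ⟨x, hxab, hx⟩ : ∃ x ∈ Ioo a b,
            DifferentiableAt ℝ β x ∧ β x ≤ c * Iaux k α (deriv β x) := by
          by_contra hcon
          rw [ae_iff] at hae2
          refine hvol (measure_mono_null (fun x hx => ?_) hae2)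
          simp only [Set.mem_setOf_eq, Classical.not_imp]
          exact ⟨hx, fun hP => hcon ⟨x, hx, hP⟩⟩
        have hderiv0 : deriv β x = 0 := by
          have heqc : β =ᶠ[𝓝 x] fun _ => c := by
            filter_upwards [Ioo_mem_nhds hxab.1 hxab.2] with y hy using hconst y hy
          rw [heqc.deriv_eq, deriv_const]
        have hI0 : Iaux k α (0:ℝ) = 0 := by
          unfold Iaux
          rw [if_pos (by norm_num : (0:ℝ) ≤ 1)]
          exact Real.zero_rpow (ne_of_gt (by positivity))
        have h5 := hx.2
        rw [hderiv0, hI0, mul_zero] at h5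
        have h6 : β x = c := hconst x hxab
        linarith
      have hlevel : ∀ᵐ x, x ∈ Ioo ε r → β x ≠ c := by
        rw [ae_iff]
        have hTsub : {x : ℝ | ¬(x ∈ Ioo ε r → β x ≠ c)}.Subsingleton := by
          intro a ha b hb
          simp only [Set.mem_setOf_eq, Classical.not_imp, not_not] at ha hb
          by_contra hab
          rcases lt_or_gt_of_ne hab with h | h
          · exact hlevel0 a b ha.1 hb.1 ha.2 hb.2 h
          · exact hlevel0 b a hb.1 ha.1 hb.2 ha.2 h
        exact hTsub.measure_zero _
      have haeg : ∀ᵐ x, x ∈ Ioo ε r → DifferentiableAt ℝ g x ∧ 1 ≤ deriv g x := by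
        filter_upwards [h1, hlevel] with x hx1 hx2 hmem
        have hd0 : 0 ≤ deriv β x :=
          mono_deriv_nonneg hβc_mono
            (((hx1 hmem).1.hasDerivAt).congr_of_eventuallyEq (heq x hmem))
        have hbpos : 0 < β x := hpos x (hIooS' hmem).1 (hIooS' hmem).2
        have hres := psi_comp_deriv k hk hα hc hAk hAα β x (hx1 hmem).1 hd0 hbpos
          (hx2 hmem) (hx1 hmem).2
        have heqg : g =ᶠ[𝓝 x] fun y => psiAux k α c A (β y) :=
          (heq x hmem).fun_comp (psiAux k α c A)
        refine ⟨heqg.differentiableAt_iff.mpr hres.1, ?_⟩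
        rw [heqg.deriv_eq]
        exact hres.2
      have hgrow := aux_mono_growth g hg_mono ε r hre.le haeg
      have hgr : g (r+1) = psiAux k α c A (β r) := by
        rw [hgdef]; simp only
        rw [max_eq_left (by linarith), min_eq_right (by linarith)]
      have hgε : g ε = psiAux k α c A (β ε) := by
        rw [hgdef]; simp only
        rw [max_self, min_eq_left hre.le]
      have hψε : 0 ≤ psiAux k α c A (β ε) :=
        psiAux_nonneg k α hA0.le hc0.le
          (hnonneg ε hε.le (lt_of_le_of_lt (ENNReal.ofReal_le_ofReal hre.le) hrR))
      rw [hgr, hgε] at hgrow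
      linarith
  -- helper: `c^{(k-1)/k} · c^{1/k} = c` and the `α` analogue
  have hcc : c ^ (((k:ℝ) - 1)/(k:ℝ)) * c ^ (1/(k:ℝ)) = c := by
    rw [← Real.rpow_add hc0]
    have h : ((k:ℝ) - 1)/(k:ℝ) + 1/(k:ℝ) = 1 := by field_simp; ring
    rw [h, Real.rpow_one]
  -- Part 1
  have part1 : ∀ r : ℝ, 0 < r → ENNReal.ofReal r < R →
      (r ≤ c * A → r ^ (k:ℝ) / (c ^ ((k:ℝ) - 1) * A ^ (k:ℝ)) ≤ β r) ∧
      (c * A < r → r ^ α / (c ^ (α - 1) * A ^ α) ≤ β r) := by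
    intro r hr hrR
    have hψ := main r hr hrR
    have hb0 : 0 ≤ β r := hnonneg r hr.le hrR
    constructor
    · intro hrcA
      rcases le_or_gt (β r) c with hbc | hbc
      · have hψeq : psiAux k α c A (β r)
            = A * c ^ (((k:ℝ) - 1)/(k:ℝ)) * (β r) ^ (1/(k:ℝ)) := if_pos hbc
        rw [hψeq] at hψ
        have h2 : r ^ (k:ℝ) ≤ (A * c ^ (((k:ℝ) - 1)/(k:ℝ)) * (β r) ^ (1/(k:ℝ))) ^ (k:ℝ) :=
          Real.rpow_le_rpow hr.le hψ (by positivity)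
        have h3 : (A * c ^ (((k:ℝ) - 1)/(k:ℝ)) * (β r) ^ (1/(k:ℝ))) ^ (k:ℝ)
            = A ^ (k:ℝ) * c ^ ((k:ℝ) - 1) * β r := by
          rw [Real.mul_rpow (by positivity) (by positivity),
            Real.mul_rpow hA0.le (by positivity), ← Real.rpow_mul hc0.le,
            ← Real.rpow_mul hb0, div_mul_cancel₀ _ (ne_of_gt hK0),
            one_div_mul_cancel (ne_of_gt hK0), Real.rpow_one]
        rw [h3] at h2
        rw [div_le_iff₀ (by positivity)]
        nlinarith [h2]
      · have hrK : r ^ (k:ℝ) ≤ c ^ (k:ℝ) * A ^ (k:ℝ) := by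
          calc r ^ (k:ℝ) ≤ (c*A) ^ (k:ℝ) := Real.rpow_le_rpow hr.le hrcA (by positivity)
          _ = c ^ (k:ℝ) * A ^ (k:ℝ) := Real.mul_rpow hc0.le hA0.le
        have hcsplit : c ^ (k:ℝ) = c * c ^ ((k:ℝ) - 1) := by
          have h : (k:ℝ) = 1 + ((k:ℝ) - 1) := by ring
          rw [h]
          rw [Real.rpow_add hc0, Real.rpow_one]
          ring_nf
        rw [div_le_iff₀ (by positivity)]
        calc r ^ (k:ℝ) ≤ c ^ (k:ℝ) * A ^ (k:ℝ) := hrK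
        _ = c * (c ^ ((k:ℝ) - 1) * A ^ (k:ℝ)) := by rw [hcsplit]; ring
        _ ≤ β r * (c ^ ((k:ℝ) - 1) * A ^ (k:ℝ)) :=
            mul_le_mul_of_nonneg_right hbc.le (by positivity)
    · intro hrcA
      have hbc : c < β r := by
        by_contra hcon
        push_neg at hcon
        have hψeq : psiAux k α c A (β r)
            = A * c ^ (((k:ℝ) - 1)/(k:ℝ)) * (β r) ^ (1/(k:ℝ)) := if_pos hcon
        have hble : (β r) ^ (1/(k:ℝ)) ≤ c ^ (1/(k:ℝ)) :=
          Real.rpow_le_rpow hb0 hcon (by positivity)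
        have h7 : psiAux k α c A (β r) ≤ A * c := by
          rw [hψeq]
          calc A * c ^ (((k:ℝ) - 1)/(k:ℝ)) * (β r) ^ (1/(k:ℝ))
              ≤ A * c ^ (((k:ℝ) - 1)/(k:ℝ)) * c ^ (1/(k:ℝ)) :=
                mul_le_mul_of_nonneg_left hble (by positivity)
          _ = A * c := by rw [mul_assoc, hcc]
        have : r ≤ A * c := le_trans hψ h7
        linarith [hrcA, mul_comm A c]
      have hψeq : psiAux k α c A (β r)
          = A * c ^ ((α - 1)/α) * (β r) ^ (1/α) := if_neg (not_le.mpr hbc)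
      rw [hψeq] at hψ
      have h2 : r ^ α ≤ (A * c ^ ((α - 1)/α) * (β r) ^ (1/α)) ^ α :=
        Real.rpow_le_rpow hr.le hψ hα0.le
      have h3 : (A * c ^ ((α - 1)/α) * (β r) ^ (1/α)) ^ α
          = A ^ α * c ^ (α - 1) * β r := by
        rw [Real.mul_rpow (by positivity) (by positivity),
          Real.mul_rpow hA0.le (by positivity), ← Real.rpow_mul hc0.le,
          ← Real.rpow_mul hb0, div_mul_cancel₀ _ (ne_of_gt hα0),
          one_div_mul_cancel (ne_of_gt hα0), Real.rpow_one]
      rw [h3] at h2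
      rw [div_le_iff₀ (by positivity)]
      nlinarith [h2]
  refine ⟨part1, ?_⟩
  -- Part 2
  intro r hr0 hrR
  set γ₁ := 1 / (c ^ ((k:ℝ) - 1) * A ^ (k:ℝ)) with hγ₁
  set γ₂ := 1 / (c ^ (α - 1) * A ^ α) with hγ₂
  have hγ₁pos : 0 < γ₁ := by rw [hγ₁]; positivity
  have hγ₂pos : 0 < γ₂ := by rw [hγ₂]; positivity
  rcases eq_or_lt_of_le hr0 with h0 | hr
  · unfold Faux
    rw [if_pos (by rw [← h0]; norm_num : r ≤ 1), ← h0,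
      Real.zero_rpow (ne_of_gt hK0), mul_zero]
    exact hnonneg 0 le_rfl (by rwa [← h0] at hrR)
  · have hγ₁eq : ∀ x : ℝ, γ₁ * x = x / (c ^ ((k:ℝ) - 1) * A ^ (k:ℝ)) := by
      intro x; rw [hγ₁]; field_simp
    have hγ₂eq : ∀ x : ℝ, γ₂ * x = x / (c ^ (α - 1) * A ^ α) := by
      intro x; rw [hγ₂]; field_simp
    rcases le_or_gt r 1 with hr1 | hr1
    · unfold Faux
      rw [if_pos hr1]
      have hb := (part1 r hr hrR).1 (by nlinarith)
      have h8 : min γ₁ γ₂ * r ^ (k:ℝ) ≤ γ₁ * r ^ (k:ℝ) :=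
        mul_le_mul_of_nonneg_right (min_le_left _ _) (by positivity)
      rw [hγ₁eq] at h8
      linarith
    · unfold Faux
      rw [if_neg (not_le.mpr hr1)]
      rcases le_or_gt r (c*A) with hrcA | hrcA
      · have hb := (part1 r hr hrR).1 hrcA
        rcases le_or_gt α (k:ℝ) with hαK | hαK
        · have hrr : r ^ α ≤ r ^ (k:ℝ) :=
            Real.rpow_le_rpow_of_exponent_le hr1.le hαK
          calc min γ₁ γ₂ * r ^ α ≤ γ₁ * r ^ α :=
              mul_le_mul_of_nonneg_right (min_le_left _ _) (by positivity)
          _ ≤ γ₁ * r ^ (k:ℝ) := mul_le_mul_of_nonneg_left hrr hγ₁pos.le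
          _ = r ^ (k:ℝ) / (c ^ ((k:ℝ) - 1) * A ^ (k:ℝ)) := hγ₁eq _
          _ ≤ β r := hb
        · have hsplit : r ^ α = r ^ (k:ℝ) * r ^ (α - (k:ℝ)) := by
            rw [← Real.rpow_add hr]
            ring_nf
          have hcomp : r ^ (α - (k:ℝ)) ≤ (c*A) ^ (α - (k:ℝ)) :=
            Real.rpow_le_rpow hr.le hrcA (by linarith)
          have hkey : γ₂ * (c*A) ^ (α - (k:ℝ)) = γ₁ := by
            rw [hγ₁, hγ₂, Real.mul_rpow hc0.le hA0.le, div_mul_eq_mul_div, one_mul,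
              div_eq_div_iff (by positivity) (by positivity), one_mul]
            calc c ^ (α - (k:ℝ)) * A ^ (α - (k:ℝ)) * (c ^ ((k:ℝ) - 1) * A ^ (k:ℝ))
                = (c ^ (α - (k:ℝ)) * c ^ ((k:ℝ) - 1)) * (A ^ (α - (k:ℝ)) * A ^ (k:ℝ)) := by
                  ring
            _ = c ^ (α - 1) * A ^ α := by
                  rw [← Real.rpow_add hc0, ← Real.rpow_add hA0]
                  norm_num
          calc min γ₁ γ₂ * r ^ α ≤ γ₂ * r ^ α :=
              mul_le_mul_of_nonneg_right (min_le_right _ _) (by positivity)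
          _ = γ₂ * (r ^ (k:ℝ) * r ^ (α - (k:ℝ))) := by rw [hsplit]
          _ ≤ γ₂ * (r ^ (k:ℝ) * (c*A) ^ (α - (k:ℝ))) := by
              refine mul_le_mul_of_nonneg_left (mul_le_mul_of_nonneg_left hcomp ?_) hγ₂pos.le
              positivity
          _ = (γ₂ * (c*A) ^ (α - (k:ℝ))) * r ^ (k:ℝ) := by ring
          _ = γ₁ * r ^ (k:ℝ) := by rw [hkey]
          _ = r ^ (k:ℝ) / (c ^ ((k:ℝ) - 1) * A ^ (k:ℝ)) := hγ₁eq _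
          _ ≤ β r := hb
      · have hb := (part1 r hr hrR).2 hrcA
        calc min γ₁ γ₂ * r ^ α ≤ γ₂ * r ^ α :=
            mul_le_mul_of_nonneg_right (min_le_right _ _) (by positivity)
        _ = r ^ α / (c ^ (α - 1) * A ^ α) := hγ₂eq _
        _ ≤ β r := hb
end
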